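/- arXiv:1305.3037 — 2 statements merged into one kernel-verified Lean document; each statement's English description precedes it below -/
import Mathlib

section
/- Let $d\ge 1$ and $1\le p\le\infty$. Suppose $\alpha>(1/p-1/2)d$ if $1\le p<2$, and $\alpha\ge 0$ if $2\le p\le\infty$. Then there is a constant $C=C(\alpha,d,p)$ such that for all $f\in L^1\cap\dot H^\alpha(\mathbb{R}^d)$ one has $\hat f\in L^p(\mathbb{R}^d)$ and $\|\hat f\|_{L^p}\le C\,\|f\|_{L^1}^{1-\mu}\,\|f\|_{\dot H^\alpha}^{\mu}$ with $\mu = 2d/(p(d+2\alpha))$. -/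
open MeasureTheory FourierTransform ENNReal Metric
open scoped NNReal

noncomputable def L1e (d : ℕ) (f : EuclideanSpace ℝ (Fin d) → ℂ) : ℝ≥0∞ :=
  ∫⁻ v, ‖f v‖₊

noncomputable def He (d : ℕ) (s : ℝ) (f : EuclideanSpace ℝ (Fin d) → ℂ) : ℝ≥0∞ :=
  (∫⁻ ξ, (‖ξ‖₊ : ℝ≥0∞) ^ (2 * s) * (‖𝓕 f ξ‖₊ : ℝ≥0∞) ^ (2 : ℝ)) ^ ((1 : ℝ) / 2)

section Aux

variable {d : ℕ}

lemma fourier_norm_le (f : EuclideanSpace ℝ (Fin d) → ℂ) (hf : Integrable f)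
    (ξ : EuclideanSpace ℝ (Fin d)) : (‖𝓕 f ξ‖₊ : ℝ≥0∞) ≤ ∫⁻ v, ‖f v‖₊ := by
  calc (‖𝓕 f ξ‖₊ : ℝ≥0∞) = ENNReal.ofReal ‖𝓕 f ξ‖ := (ofReal_norm _).symm
  _ ≤ ENNReal.ofReal (∫ v, ‖f v‖) := ENNReal.ofReal_le_ofReal
      (VectorFourier.norm_fourierIntegral_le_integral_norm _ _ _ f ξ)
  _ = ∫⁻ v, ‖f v‖₊ := ofReal_integral_norm_eq_lintegral_enorm hf

lemma fourier_cont (f : EuclideanSpace ℝ (Fin d) → ℂ) (hf : Integrable f) :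
    Continuous (𝓕 f) :=
  VectorFourier.fourierIntegral_continuous Real.continuous_fourierChar
    (by exact continuous_inner) hf

lemma abpow {a b : ℝ≥0∞} (ha0 : a ≠ 0) (hat : a ≠ ⊤) (hb0 : b ≠ 0) (hbt : b ≠ ⊤)
    (t e u : ℝ) : a ^ t * (b / a) ^ e * b ^ u = a ^ (t - e) * b ^ (u + e) := by
  rw [div_eq_mul_inv, ENNReal.mul_rpow_of_ne_top hbt (by simpa using ha0),
    ENNReal.inv_rpow, ← ENNReal.rpow_neg]
  calc a ^ t * (b ^ e * a ^ (-e)) * b ^ u = (a ^ t * a ^ (-e)) * (b ^ u * b ^ e) := by ring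
    _ = a ^ (t - e) * b ^ (u + e) := by
        rw [← ENNReal.rpow_add _ _ ha0 hat, ← ENNReal.rpow_add _ _ hb0 hbt, sub_eq_add_neg]

lemma nontriv_euclidean (hd : 1 ≤ d) : Nontrivial (EuclideanSpace ℝ (Fin d)) := by
  apply Module.nontrivial_of_finrank_pos (R := ℝ)
  rw [finrank_euclideanSpace, Fintype.card_fin]
  omega

lemma low_bound (hd : 1 ≤ d) {q : ℝ} (hq : 0 ≤ q) {g : EuclideanSpace ℝ (Fin d) → ℂ}
    {A : ℝ≥0∞} (hA : ∀ ξ, (‖g ξ‖₊ : ℝ≥0∞) ≤ A) {r : ℝ} (hr : 0 ≤ r) :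
    ∫⁻ ξ in ball (0 : EuclideanSpace ℝ (Fin d)) r, (‖g ξ‖₊ : ℝ≥0∞) ^ q
      ≤ volume (ball (0 : EuclideanSpace ℝ (Fin d)) 1) * A ^ q * ENNReal.ofReal r ^ (d : ℝ) := by
  haveI := nontriv_euclidean hd
  calc ∫⁻ ξ in ball (0 : EuclideanSpace ℝ (Fin d)) r, (‖g ξ‖₊ : ℝ≥0∞) ^ q
      ≤ ∫⁻ _ in ball (0 : EuclideanSpace ℝ (Fin d)) r, A ^ q :=
        setLIntegral_mono' measurableSet_ball (fun ξ _ => ENNReal.rpow_le_rpow (hA ξ) hq)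
    _ = A ^ q * volume (ball (0 : EuclideanSpace ℝ (Fin d)) r) := by
        rw [setLIntegral_const]
    _ = volume (ball (0 : EuclideanSpace ℝ (Fin d)) 1) * A ^ q * ENNReal.ofReal r ^ (d : ℝ) := by
        rw [Measure.addHaar_ball volume 0 hr, finrank_euclideanSpace, Fintype.card_fin,
          ENNReal.ofReal_pow hr, ENNReal.rpow_natCast]
        ring

lemma high_ge2 {q α : ℝ} (hq : 2 ≤ q) (hα : 0 ≤ α) {g : EuclideanSpace ℝ (Fin d) → ℂ}
    {A : ℝ≥0∞} (hA : ∀ ξ, (‖g ξ‖₊ : ℝ≥0∞) ≤ A) (hAt : A ≠ ⊤) {r : ℝ} (hr : 0 < r) :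
    ∫⁻ ξ in (ball (0 : EuclideanSpace ℝ (Fin d)) r)ᶜ, (‖g ξ‖₊ : ℝ≥0∞) ^ q
      ≤ A ^ (q - 2) * ENNReal.ofReal r ^ (-(2 * α)) *
        ∫⁻ ξ, (‖ξ‖₊ : ℝ≥0∞) ^ (2 * α) * (‖g ξ‖₊ : ℝ≥0∞) ^ (2 : ℝ) := by
  have hr0 : ENNReal.ofReal r ≠ 0 := by simp [hr]
  have hpt : ∀ ξ ∈ (ball (0 : EuclideanSpace ℝ (Fin d)) r)ᶜ,
      (‖g ξ‖₊ : ℝ≥0∞) ^ q ≤ A ^ (q - 2) * ENNReal.ofReal r ^ (-(2 * α)) *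
        ((‖ξ‖₊ : ℝ≥0∞) ^ (2 * α) * (‖g ξ‖₊ : ℝ≥0∞) ^ (2 : ℝ)) := by
    intro ξ hξ
    have hξr : ENNReal.ofReal r ≤ (‖ξ‖₊ : ℝ≥0∞) := by
      have : r ≤ ‖ξ‖ := by simpa [dist_eq_norm] using hξ
      rw [← enorm_eq_nnnorm, ← ofReal_norm]
      exact ENNReal.ofReal_le_ofReal this
    have h1 : (1 : ℝ≥0∞) ≤ ENNReal.ofReal r ^ (-(2 * α)) * (‖ξ‖₊ : ℝ≥0∞) ^ (2 * α) := by
      have : ENNReal.ofReal r ^ (2 * α) ≤ (‖ξ‖₊ : ℝ≥0∞) ^ (2 * α) :=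
        ENNReal.rpow_le_rpow hξr (by positivity)
      calc (1 : ℝ≥0∞) = ENNReal.ofReal r ^ (-(2 * α)) * ENNReal.ofReal r ^ (2 * α) := by
            rw [← ENNReal.rpow_add _ _ hr0 ENNReal.ofReal_ne_top, neg_add_cancel,
              ENNReal.rpow_zero]
        _ ≤ _ := by gcongr
    calc (‖g ξ‖₊ : ℝ≥0∞) ^ q = (‖g ξ‖₊ : ℝ≥0∞) ^ (q - 2) * (‖g ξ‖₊ : ℝ≥0∞) ^ (2 : ℝ) := by
          rw [← ENNReal.rpow_add_of_nonneg _ _ (by linarith) (by norm_num), sub_add_cancel]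
      _ ≤ A ^ (q - 2) * (1 * (‖g ξ‖₊ : ℝ≥0∞) ^ (2 : ℝ)) := by
          rw [one_mul]
          exact mul_le_mul_left (ENNReal.rpow_le_rpow (hA ξ) (by linarith)) _
      _ ≤ A ^ (q - 2) * ((ENNReal.ofReal r ^ (-(2 * α)) * (‖ξ‖₊ : ℝ≥0∞) ^ (2 * α)) *
            (‖g ξ‖₊ : ℝ≥0∞) ^ (2 : ℝ)) := by gcongr
      _ = A ^ (q - 2) * ENNReal.ofReal r ^ (-(2 * α)) *
            ((‖ξ‖₊ : ℝ≥0∞) ^ (2 * α) * (‖g ξ‖₊ : ℝ≥0∞) ^ (2 : ℝ)) := by ring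
  calc ∫⁻ ξ in (ball (0 : EuclideanSpace ℝ (Fin d)) r)ᶜ, (‖g ξ‖₊ : ℝ≥0∞) ^ q
      ≤ ∫⁻ ξ in (ball (0 : EuclideanSpace ℝ (Fin d)) r)ᶜ,
          A ^ (q - 2) * ENNReal.ofReal r ^ (-(2 * α)) *
            ((‖ξ‖₊ : ℝ≥0∞) ^ (2 * α) * (‖g ξ‖₊ : ℝ≥0∞) ^ (2 : ℝ)) :=
        setLIntegral_mono' measurableSet_ball.compl hpt
    _ ≤ ∫⁻ ξ, A ^ (q - 2) * ENNReal.ofReal r ^ (-(2 * α)) *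
            ((‖ξ‖₊ : ℝ≥0∞) ^ (2 * α) * (‖g ξ‖₊ : ℝ≥0∞) ^ (2 : ℝ)) :=
        setLIntegral_le_lintegral _ _
    _ = A ^ (q - 2) * ENNReal.ofReal r ^ (-(2 * α)) *
          ∫⁻ ξ, (‖ξ‖₊ : ℝ≥0∞) ^ (2 * α) * (‖g ξ‖₊ : ℝ≥0∞) ^ (2 : ℝ) := by
        rw [lintegral_const_mul']
        exact ENNReal.mul_ne_top (ENNReal.rpow_ne_top_of_nonneg (by linarith) hAt)
          (by simp [ENNReal.rpow_eq_top_iff, ENNReal.ofReal_eq_zero, not_le, hr])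


lemma high_lt2 {q α : ℝ} (hq1 : 1 ≤ q) (hq2 : q < 2) {g : EuclideanSpace ℝ (Fin d) → ℂ}
    (hgm : Measurable g) {r : ℝ} (hr : 0 < r) :
    ∫⁻ ξ in (ball (0 : EuclideanSpace ℝ (Fin d)) r)ᶜ, (‖g ξ‖₊ : ℝ≥0∞) ^ q
      ≤ (∫⁻ ξ, (‖ξ‖₊ : ℝ≥0∞) ^ (2 * α) * (‖g ξ‖₊ : ℝ≥0∞) ^ (2 : ℝ)) ^ (q / 2) *
        (∫⁻ ξ in (ball (0 : EuclideanSpace ℝ (Fin d)) r)ᶜ,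
          (‖ξ‖₊ : ℝ≥0∞) ^ (-(2 * α * q / (2 - q)))) ^ ((2 - q) / 2) := by
  have hq0 : 0 < q := lt_of_lt_of_le one_pos hq1
  have h2q : 0 < 2 - q := by linarith
  set S := (ball (0 : EuclideanSpace ℝ (Fin d)) r)ᶜ with hS
  have hSm : MeasurableSet S := measurableSet_ball.compl
  set u : EuclideanSpace ℝ (Fin d) → ℝ≥0∞ :=
    fun ξ => ((‖ξ‖₊ : ℝ≥0∞) ^ α * (‖g ξ‖₊ : ℝ≥0∞)) ^ q with hu
  set v : EuclideanSpace ℝ (Fin d) → ℝ≥0∞ :=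
    fun ξ => (‖ξ‖₊ : ℝ≥0∞) ^ (-(α * q)) with hv
  have hum : AEMeasurable u (volume.restrict S) := by
    apply Measurable.aemeasurable
    exact (((measurable_nnnorm.coe_nnreal_ennreal).pow_const α).mul
      (hgm.nnnorm.coe_nnreal_ennreal)).pow_const q
  have hvm : AEMeasurable v (volume.restrict S) := by
    apply Measurable.aemeasurable
    exact (measurable_nnnorm.coe_nnreal_ennreal).pow_const _
  have hconj : (2 / q).HolderConjugate (2 / (2 - q)) := by
    refine ⟨?_, div_pos two_pos hq0, div_pos two_pos h2q⟩
    rw [inv_div, inv_div, inv_one]; ring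
  have heq : ∀ ξ ∈ S, (‖g ξ‖₊ : ℝ≥0∞) ^ q = u ξ * v ξ := by
    intro ξ hξ
    have hξ2 : ξ ∈ (ball (0 : EuclideanSpace ℝ (Fin d)) r)ᶜ := hξ
    have hξr : (0 : ℝ) < ‖ξ‖ := lt_of_lt_of_le hr (by simpa [dist_eq_norm] using hξ2)
    have hξ0 : (‖ξ‖₊ : ℝ≥0∞) ≠ 0 := by simpa using hξr.ne'
    calc (‖g ξ‖₊ : ℝ≥0∞) ^ q
        = ((‖ξ‖₊ : ℝ≥0∞) ^ (α * q) * (‖ξ‖₊ : ℝ≥0∞) ^ (-(α * q))) * (‖g ξ‖₊ : ℝ≥0∞) ^ q := by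
          rw [← ENNReal.rpow_add _ _ hξ0 ENNReal.coe_ne_top, add_neg_cancel,
            ENNReal.rpow_zero, one_mul]
      _ = u ξ * v ξ := by
          show _ = ((‖ξ‖₊ : ℝ≥0∞) ^ α * (‖g ξ‖₊ : ℝ≥0∞)) ^ q * (‖ξ‖₊ : ℝ≥0∞) ^ (-(α * q))
          rw [ENNReal.mul_rpow_of_nonneg _ _ hq0.le, ← ENNReal.rpow_mul]
          ring
  calc ∫⁻ ξ in S, (‖g ξ‖₊ : ℝ≥0∞) ^ q
      = ∫⁻ ξ in S, u ξ * v ξ := setLIntegral_congr_fun hSm heq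
    _ ≤ (∫⁻ ξ in S, u ξ ^ (2 / q)) ^ (q / 2) * (∫⁻ ξ in S, v ξ ^ (2 / (2 - q))) ^ ((2 - q) / 2) := by
        have h := ENNReal.lintegral_mul_le_Lp_mul_Lq (volume.restrict S) hconj hum hvm
        rw [one_div_div, one_div_div] at h
        exact h
    _ = (∫⁻ ξ in S, (‖ξ‖₊ : ℝ≥0∞) ^ (2 * α) * (‖g ξ‖₊ : ℝ≥0∞) ^ (2 : ℝ)) ^ (q / 2) *
          (∫⁻ ξ in S, (‖ξ‖₊ : ℝ≥0∞) ^ (-(2 * α * q / (2 - q)))) ^ ((2 - q) / 2) := by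
        congr 1
        · congr 1
          refine setLIntegral_congr_fun hSm (fun ξ _ => ?_)
          simp only [hu]
          rw [← ENNReal.rpow_mul,
            show q * (2 / q) = (2 : ℝ) by rw [mul_comm]; exact div_mul_cancel₀ 2 hq0.ne',
            ENNReal.mul_rpow_of_nonneg _ _ (by norm_num : (0:ℝ) ≤ 2), ← ENNReal.rpow_mul,
            show α * 2 = 2 * α by ring]
        · congr 1
          refine setLIntegral_congr_fun hSm (fun ξ _ => ?_)
          simp only [hv]
          rw [← ENNReal.rpow_mul,
            show (-(α * q)) * (2 / (2 - q)) = -(2 * α * q / (2 - q)) by ring]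
    _ ≤ _ := by
        exact mul_le_mul'
          (ENNReal.rpow_le_rpow (setLIntegral_le_lintegral _ _) (by positivity)) le_rfl


lemma tail_bound (hd : 1 ≤ d) {s : ℝ} (hs : (d : ℝ) < s) :
    ∃ T : ℝ≥0∞, T ≠ ⊤ ∧ ∀ r : ℝ, 0 < r →
      ∫⁻ ξ in (ball (0 : EuclideanSpace ℝ (Fin d)) r)ᶜ, (‖ξ‖₊ : ℝ≥0∞) ^ (-s)
        ≤ ENNReal.ofReal r ^ ((d : ℝ) - s) * T := by
  have hs0 : 0 < s := lt_of_le_of_lt (by positivity) hs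
  have hmeas : Measurable fun ξ : EuclideanSpace ℝ (Fin d) => (‖ξ‖₊ : ℝ≥0∞) ^ (-s) :=
    (measurable_nnnorm.coe_nnreal_ennreal).pow_const _
  refine ⟨∫⁻ ξ in (ball (0 : EuclideanSpace ℝ (Fin d)) 1)ᶜ, (‖ξ‖₊ : ℝ≥0∞) ^ (-s), ?_, ?_⟩
  · -- finiteness
    have hbound : ∀ ξ : EuclideanSpace ℝ (Fin d), ξ ∈ (ball (0 : EuclideanSpace ℝ (Fin d)) 1)ᶜ →
        (‖ξ‖₊ : ℝ≥0∞) ^ (-s) ≤ ENNReal.ofReal (2 ^ s) * ENNReal.ofReal ((1 + ‖ξ‖) ^ (-s)) := by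
      intro ξ hξ
      have h1 : (1 : ℝ) ≤ ‖ξ‖ := by simpa [dist_eq_norm] using hξ
      have h0 : (0:ℝ) < ‖ξ‖ := lt_of_lt_of_le one_pos h1
      have key : ‖ξ‖ ^ (-s) ≤ 2 ^ s * (1 + ‖ξ‖) ^ (-s) := by
        have h2 : (1 + ‖ξ‖) ≤ 2 * ‖ξ‖ := by linarith
        have hmono := Real.rpow_le_rpow_of_nonpos (by positivity) h2 (neg_nonpos.mpr hs0.le)
        calc ‖ξ‖ ^ (-s) = 2 ^ s * ((2 * ‖ξ‖) ^ (-s)) := by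
              rw [Real.mul_rpow (by norm_num) h0.le, ← mul_assoc, ← Real.rpow_add two_pos,
                add_neg_cancel, Real.rpow_zero, one_mul]
          _ ≤ 2 ^ s * (1 + ‖ξ‖) ^ (-s) := by gcongr
      calc (‖ξ‖₊ : ℝ≥0∞) ^ (-s) = ENNReal.ofReal (‖ξ‖ ^ (-s)) := by
            rw [← enorm_eq_nnnorm, ← ofReal_norm]
            exact ENNReal.ofReal_rpow_of_pos h0
        _ ≤ ENNReal.ofReal (2 ^ s * (1 + ‖ξ‖) ^ (-s)) := ENNReal.ofReal_le_ofReal key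
        _ = ENNReal.ofReal (2 ^ s) * ENNReal.ofReal ((1 + ‖ξ‖) ^ (-s)) :=
            ENNReal.ofReal_mul (by positivity)
    apply ne_of_lt
    calc ∫⁻ ξ in (ball (0 : EuclideanSpace ℝ (Fin d)) 1)ᶜ, (‖ξ‖₊ : ℝ≥0∞) ^ (-s)
        ≤ ∫⁻ ξ in (ball (0 : EuclideanSpace ℝ (Fin d)) 1)ᶜ,
            ENNReal.ofReal (2 ^ s) * ENNReal.ofReal ((1 + ‖ξ‖) ^ (-s)) :=
          setLIntegral_mono' measurableSet_ball.compl hbound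
      _ ≤ ∫⁻ ξ : EuclideanSpace ℝ (Fin d),
            ENNReal.ofReal (2 ^ s) * ENNReal.ofReal ((1 + ‖ξ‖) ^ (-s)) :=
          setLIntegral_le_lintegral _ _
      _ = ENNReal.ofReal (2 ^ s) * ∫⁻ ξ : EuclideanSpace ℝ (Fin d),
            ENNReal.ofReal ((1 + ‖ξ‖) ^ (-s)) := lintegral_const_mul _ (by fun_prop)
      _ < ⊤ := by
          refine ENNReal.mul_lt_top ENNReal.ofReal_lt_top ?_
          exact finite_integral_one_add_norm (μ := (volume : Measure (EuclideanSpace ℝ (Fin d))))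
            (r := s) (by simpa [finrank_euclideanSpace] using hs)
  · intro r hr
    have hr0 : ENNReal.ofReal r ≠ 0 := by simp [hr]
    set F : EuclideanSpace ℝ (Fin d) → ℝ≥0∞ :=
      ((ball (0 : EuclideanSpace ℝ (Fin d)) r)ᶜ).indicator (fun ξ => (‖ξ‖₊ : ℝ≥0∞) ^ (-s))
      with hFdef
    have hFmeas : Measurable F := hmeas.indicator measurableSet_ball.compl
    have hmap : ∫⁻ η, F (r • η) = ENNReal.ofReal |(r ^ d)⁻¹| * ∫⁻ ξ, F ξ := by
      rw [← lintegral_map hFmeas (measurable_const_smul r), Measure.map_addHaar_smul volume hr.ne',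
        lintegral_smul_measure, finrank_euclideanSpace, Fintype.card_fin, smul_eq_mul]
    have hscale : ∫⁻ ξ, F ξ = ENNReal.ofReal (r ^ d) * ∫⁻ η, F (r • η) := by
      rw [hmap, ← mul_assoc, ← ENNReal.ofReal_mul (by positivity), abs_of_pos (by positivity),
        mul_inv_cancel₀ (by positivity), ENNReal.ofReal_one, one_mul]
    have hpt : ∀ η : EuclideanSpace ℝ (Fin d), F (r • η) =
        ENNReal.ofReal r ^ (-s) *
          ((ball (0 : EuclideanSpace ℝ (Fin d)) 1)ᶜ).indicator
            (fun η => (‖η‖₊ : ℝ≥0∞) ^ (-s)) η := by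
      intro η
      have hnorm : ‖r • η‖ = r * ‖η‖ := by
        rw [norm_smul, Real.norm_eq_abs, abs_of_pos hr]
      by_cases hη : η ∈ (ball (0 : EuclideanSpace ℝ (Fin d)) 1)ᶜ
      · have h1 : (1 : ℝ) ≤ ‖η‖ := by simpa [dist_eq_norm] using hη
        have hmem : r • η ∈ (ball (0 : EuclideanSpace ℝ (Fin d)) r)ᶜ := by
          simp only [Set.mem_compl_iff, mem_ball, dist_zero_right, not_lt, hnorm]
          nlinarith
        rw [hFdef, Set.indicator_of_mem hmem, Set.indicator_of_mem hη]
        have hcoe : (‖r • η‖₊ : ℝ≥0∞) = ENNReal.ofReal r * (‖η‖₊ : ℝ≥0∞) := by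
          rw [← enorm_eq_nnnorm, ← ofReal_norm, ← enorm_eq_nnnorm, ← ofReal_norm, hnorm,
            ENNReal.ofReal_mul hr.le]
        rw [hcoe, ENNReal.mul_rpow_of_ne_zero hr0 (by simpa using (lt_of_lt_of_le one_pos h1).ne')]
      · have h1 : ‖η‖ < 1 := by simpa [dist_eq_norm] using hη
        have hmem : r • η ∉ (ball (0 : EuclideanSpace ℝ (Fin d)) r)ᶜ := by
          simp only [Set.mem_compl_iff, mem_ball, dist_zero_right, not_lt, hnorm, not_not, not_le]
          nlinarith
        rw [hFdef, Set.indicator_of_notMem hmem, Set.indicator_of_notMem hη, mul_zero]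
    calc ∫⁻ ξ in (ball (0 : EuclideanSpace ℝ (Fin d)) r)ᶜ, (‖ξ‖₊ : ℝ≥0∞) ^ (-s)
        = ∫⁻ ξ, F ξ := (lintegral_indicator measurableSet_ball.compl _).symm
      _ = ENNReal.ofReal (r ^ d) * ∫⁻ η, F (r • η) := hscale
      _ = ENNReal.ofReal (r ^ d) * (ENNReal.ofReal r ^ (-s) *
            ∫⁻ η, ((ball (0 : EuclideanSpace ℝ (Fin d)) 1)ᶜ).indicator
              (fun η => (‖η‖₊ : ℝ≥0∞) ^ (-s)) η) := by
          rw [← lintegral_const_mul _ (hmeas.indicator measurableSet_ball.compl)]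
          simp_rw [hpt]
      _ = ENNReal.ofReal r ^ ((d : ℝ) - s) *
            ∫⁻ ξ in (ball (0 : EuclideanSpace ℝ (Fin d)) 1)ᶜ, (‖ξ‖₊ : ℝ≥0∞) ^ (-s) := by
          rw [lintegral_indicator measurableSet_ball.compl _, ← mul_assoc,
            ENNReal.ofReal_pow hr.le, ← ENNReal.rpow_natCast, ← ENNReal.rpow_add _ _ hr0
              ENNReal.ofReal_ne_top, sub_eq_add_neg]
      _ ≤ _ := le_rfl

end Aux
theorem stmt1 (d : ℕ) (hd : 1 ≤ d) (p : ℝ≥0∞) (hp : 1 ≤ p) (α : ℝ)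
    (hα1 : p < 2 → α > (1 / p.toReal - 1 / 2) * d)
    (hα2 : 2 ≤ p → 0 ≤ α) :
    ∃ C : ℝ≥0, 0 < C ∧ ∀ f : EuclideanSpace ℝ (Fin d) → ℂ, Integrable f →
      He d α f ≠ ⊤ →
      MemLp (𝓕 f) p volume ∧
      eLpNorm (𝓕 f) p volume ≤
        C * L1e d f ^ (1 - 2 * (d : ℝ) / (p.toReal * ((d : ℝ) + 2 * α))) *
          He d α f ^ (2 * (d : ℝ) / (p.toReal * ((d : ℝ) + 2 * α))) := by
  by_cases hptop : p = ⊤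
  · subst hptop
    refine ⟨1, one_pos, fun f hf _ => ?_⟩
    have hAt : L1e d f ≠ ⊤ := hf.2.ne
    refine ⟨memLp_top_of_bound (fourier_cont f hf).aestronglyMeasurable (∫ v, ‖f v‖)
        (Filter.Eventually.of_forall fun ξ =>
          VectorFourier.norm_fourierIntegral_le_integral_norm _ _ _ f ξ), ?_⟩
    rw [show (2 * (d : ℝ) / ((⊤ : ℝ≥0∞).toReal * ((d : ℝ) + 2 * α))) = 0 by simp,
      ENNReal.rpow_zero, sub_zero, ENNReal.rpow_one, mul_one, ENNReal.coe_one, one_mul,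
      eLpNorm_exponent_top]
    refine le_trans (eLpNormEssSup_le_of_ae_nnnorm_bound (C := (L1e d f).toNNReal)
      (Filter.Eventually.of_forall fun ξ => ?_)) ?_
    · have h := fourier_norm_le f hf ξ
      rw [show (∫⁻ v, (‖f v‖₊ : ℝ≥0∞)) = L1e d f from rfl,
        ← ENNReal.coe_toNNReal hAt] at h
      exact_mod_cast h
    · rw [ENNReal.coe_toNNReal hAt]
  -- main case : p finite
  have hp0 : p ≠ 0 := fun h => by simp [h] at hp
  set q := p.toReal with hqdef
  have hq1 : (1 : ℝ) ≤ q := by simpa using ENNReal.toReal_mono hptop hp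
  have hq0 : (0 : ℝ) < q := lt_of_lt_of_le one_pos hq1
  have hd1 : (1 : ℝ) ≤ (d : ℝ) := by exact_mod_cast hd
  have hα0 : 0 ≤ α := by
    rcases lt_or_ge p 2 with h | h
    · have h2 : q < 2 := by
        have := (ENNReal.toReal_lt_toReal hptop (by norm_num : (2:ℝ≥0∞) ≠ ⊤)).mpr h
        simpa using this
      have h3 := hα1 h
      have h4 : (0:ℝ) ≤ 1/q - 1/2 := by
        rw [sub_nonneg]
        exact one_div_le_one_div_of_le hq0 h2.le
      nlinarith
    · exact hα2 h
  have hκ : (0 : ℝ) < (d : ℝ) + 2 * α := by linarith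
  set ν : ℝ := 2 * (d : ℝ) / ((d : ℝ) + 2 * α) with hν
  have key : ∃ C₀ : ℝ≥0∞, C₀ ≠ ⊤ ∧ ∀ f : EuclideanSpace ℝ (Fin d) → ℂ, Integrable f →
      L1e d f ≠ 0 → He d α f ≠ 0 → He d α f ≠ ⊤ →
      ∫⁻ ξ, (‖𝓕 f ξ‖₊ : ℝ≥0∞) ^ q ≤ C₀ * (L1e d f ^ (q - ν) * He d α f ^ ν) := by
    rcases lt_or_ge q 2 with hq2 | hq2
    · -- q < 2 : Hoelder branch
      have hp2 : p < 2 := by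
        refine (ENNReal.toReal_lt_toReal hptop (by norm_num : (2:ℝ≥0∞) ≠ ⊤)).mp ?_
        simpa using hq2
      have hαq := hα1 hp2
      have h2q : (0:ℝ) < 2 - q := by linarith
      have hs : (d:ℝ) < 2 * α * q / (2 - q) := by
        rw [lt_div_iff₀ h2q]
        have hinv : q * (1/q) = 1 := mul_one_div_cancel hq0.ne'
        nlinarith [mul_lt_mul_of_pos_left hαq hq0]
      obtain ⟨T, hTt, hT⟩ := tail_bound hd hs
      refine ⟨volume (ball (0 : EuclideanSpace ℝ (Fin d)) 1) + T ^ ((2-q)/2),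
        ENNReal.add_ne_top.mpr ⟨measure_ball_lt_top.ne,
          ENNReal.rpow_ne_top_of_nonneg (by positivity) hTt⟩, ?_⟩
      intro f hf ha0 hb0 hbt
      have hgc := fourier_cont f hf
      have hgm : Measurable (𝓕 f) := hgc.measurable
      have hat : L1e d f ≠ ⊤ := hf.2.ne
      have hA : ∀ ξ, (‖𝓕 f ξ‖₊ : ℝ≥0∞) ≤ L1e d f := fourier_norm_le f hf
      have hbJ : He d α f ^ (2:ℝ)
          = ∫⁻ ξ, (‖ξ‖₊ : ℝ≥0∞) ^ (2*α) * (‖𝓕 f ξ‖₊ : ℝ≥0∞) ^ (2:ℝ) := by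
        rw [show He d α f = (∫⁻ ξ, (‖ξ‖₊ : ℝ≥0∞) ^ (2*α) *
            (‖𝓕 f ξ‖₊ : ℝ≥0∞) ^ (2:ℝ)) ^ ((1:ℝ)/2) from rfl, ← ENNReal.rpow_mul]
        norm_num
      set ρ := He d α f / L1e d f with hρdef
      have hρ0 : ρ ≠ 0 := by
        simp [hρdef, ENNReal.div_eq_zero_iff, hb0, hat]
      have hρt : ρ ≠ ⊤ := (ENNReal.div_lt_top hbt ha0).ne
      have hrρ0 : ρ ^ (2/((d:ℝ)+2*α)) ≠ 0 := by
        simp [ENNReal.rpow_eq_zero_iff, hρ0, hρt]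
      have hrρt : ρ ^ (2/((d:ℝ)+2*α)) ≠ ⊤ := by
        simp [ENNReal.rpow_eq_top_iff, hρ0, hρt]
      set r : ℝ := (ρ ^ (2/((d:ℝ)+2*α))).toReal with hrdef
      have hr0 : 0 < r := ENNReal.toReal_pos hrρ0 hrρt
      have hofr : ENNReal.ofReal r = ρ ^ (2/((d:ℝ)+2*α)) := ENNReal.ofReal_toReal hrρt
      have hsplit : ∫⁻ ξ, (‖𝓕 f ξ‖₊ : ℝ≥0∞) ^ q
          = (∫⁻ ξ in ball (0 : EuclideanSpace ℝ (Fin d)) r, (‖𝓕 f ξ‖₊ : ℝ≥0∞) ^ q)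
            + ∫⁻ ξ in (ball (0 : EuclideanSpace ℝ (Fin d)) r)ᶜ, (‖𝓕 f ξ‖₊ : ℝ≥0∞) ^ q :=
        (lintegral_add_compl _ measurableSet_ball).symm
      have hlow : (∫⁻ ξ in ball (0 : EuclideanSpace ℝ (Fin d)) r, (‖𝓕 f ξ‖₊ : ℝ≥0∞) ^ q)
          ≤ volume (ball (0 : EuclideanSpace ℝ (Fin d)) 1) *
            (L1e d f ^ (q - ν) * He d α f ^ ν) := by
        refine (low_bound hd hq0.le hA hr0.le).trans_eq ?_
        rw [hofr, ← ENNReal.rpow_mul,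
          show (2/((d:ℝ)+2*α))*(d:ℝ) = ν by rw [hν]; ring, mul_assoc]
        congr 1
        calc L1e d f ^ q * ρ ^ ν
            = L1e d f ^ q * ρ ^ ν * He d α f ^ (0:ℝ) := by
              rw [ENNReal.rpow_zero, mul_one]
          _ = L1e d f ^ (q - ν) * He d α f ^ (0 + ν) := abpow ha0 hat hb0 hbt q ν 0
          _ = L1e d f ^ (q - ν) * He d α f ^ ν := by rw [zero_add]
      have he3 : (2/((d:ℝ)+2*α)) * (((d:ℝ) - 2*α*q/(2-q)) * ((2-q)/2)) = ν - q := by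
        rw [hν]
        field_simp
        ring
      have hhigh : (∫⁻ ξ in (ball (0 : EuclideanSpace ℝ (Fin d)) r)ᶜ, (‖𝓕 f ξ‖₊ : ℝ≥0∞) ^ q)
          ≤ T ^ ((2-q)/2) * (L1e d f ^ (q - ν) * He d α f ^ ν) := by
        refine (high_lt2 (α := α) hq1 hq2 hgm hr0).trans ?_
        have h1 : (∫⁻ ξ, (‖ξ‖₊ : ℝ≥0∞) ^ (2*α) * (‖𝓕 f ξ‖₊ : ℝ≥0∞) ^ (2:ℝ)) ^ (q/2)
            = He d α f ^ q := by
          rw [← hbJ, ← ENNReal.rpow_mul, show (2:ℝ) * (q/2) = q by ring]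
        have h2 : (∫⁻ ξ in (ball (0 : EuclideanSpace ℝ (Fin d)) r)ᶜ,
              (‖ξ‖₊ : ℝ≥0∞) ^ (-(2*α*q/(2-q)))) ^ ((2-q)/2)
            ≤ ρ ^ (ν - q) * T ^ ((2-q)/2) := by
          refine le_trans (ENNReal.rpow_le_rpow (hT r hr0) (by positivity)) ?_
          rw [ENNReal.mul_rpow_of_nonneg _ _ (by positivity : (0:ℝ) ≤ (2-q)/2),
            hofr, ← ENNReal.rpow_mul, ← ENNReal.rpow_mul, he3]
        calc (∫⁻ ξ, (‖ξ‖₊ : ℝ≥0∞) ^ (2*α) * (‖𝓕 f ξ‖₊ : ℝ≥0∞) ^ (2:ℝ)) ^ (q/2) *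
              (∫⁻ ξ in (ball (0 : EuclideanSpace ℝ (Fin d)) r)ᶜ,
                (‖ξ‖₊ : ℝ≥0∞) ^ (-(2*α*q/(2-q)))) ^ ((2-q)/2)
            ≤ He d α f ^ q * (ρ ^ (ν - q) * T ^ ((2-q)/2)) := by
              rw [h1]
              exact mul_le_mul' le_rfl h2
          _ = T ^ ((2-q)/2) * (L1e d f ^ ((0:ℝ) - (ν - q)) * He d α f ^ (q + (ν - q))) := by
              rw [← abpow ha0 hat hb0 hbt 0 (ν - q) q, ENNReal.rpow_zero, one_mul]
              ring
          _ = T ^ ((2-q)/2) * (L1e d f ^ (q - ν) * He d α f ^ ν) := by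
              rw [show (0:ℝ) - (ν - q) = q - ν by ring, show q + (ν - q) = ν by ring]
      calc ∫⁻ ξ, (‖𝓕 f ξ‖₊ : ℝ≥0∞) ^ q = _ + _ := hsplit
        _ ≤ volume (ball (0 : EuclideanSpace ℝ (Fin d)) 1) *
              (L1e d f ^ (q - ν) * He d α f ^ ν)
            + T ^ ((2-q)/2) * (L1e d f ^ (q - ν) * He d α f ^ ν) := add_le_add hlow hhigh
        _ = _ := by ring
    · -- 2 ≤ q
      refine ⟨volume (ball (0 : EuclideanSpace ℝ (Fin d)) 1) + 1,
        ENNReal.add_ne_top.mpr ⟨measure_ball_lt_top.ne, ENNReal.one_ne_top⟩, ?_⟩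
      intro f hf ha0 hb0 hbt
      have hgc := fourier_cont f hf
      have hgm : Measurable (𝓕 f) := hgc.measurable
      have hat : L1e d f ≠ ⊤ := hf.2.ne
      have hA : ∀ ξ, (‖𝓕 f ξ‖₊ : ℝ≥0∞) ≤ L1e d f := fourier_norm_le f hf
      have hbJ : He d α f ^ (2:ℝ)
          = ∫⁻ ξ, (‖ξ‖₊ : ℝ≥0∞) ^ (2*α) * (‖𝓕 f ξ‖₊ : ℝ≥0∞) ^ (2:ℝ) := by
        rw [show He d α f = (∫⁻ ξ, (‖ξ‖₊ : ℝ≥0∞) ^ (2*α) *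
            (‖𝓕 f ξ‖₊ : ℝ≥0∞) ^ (2:ℝ)) ^ ((1:ℝ)/2) from rfl, ← ENNReal.rpow_mul]
        norm_num
      set ρ := He d α f / L1e d f with hρdef
      have hρ0 : ρ ≠ 0 := by
        simp [hρdef, ENNReal.div_eq_zero_iff, hb0, hat]
      have hρt : ρ ≠ ⊤ := (ENNReal.div_lt_top hbt ha0).ne
      have hrρ0 : ρ ^ (2/((d:ℝ)+2*α)) ≠ 0 := by
        simp [ENNReal.rpow_eq_zero_iff, hρ0, hρt]
      have hrρt : ρ ^ (2/((d:ℝ)+2*α)) ≠ ⊤ := by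
        simp [ENNReal.rpow_eq_top_iff, hρ0, hρt]
      set r : ℝ := (ρ ^ (2/((d:ℝ)+2*α))).toReal with hrdef
      have hr0 : 0 < r := ENNReal.toReal_pos hrρ0 hrρt
      have hofr : ENNReal.ofReal r = ρ ^ (2/((d:ℝ)+2*α)) := ENNReal.ofReal_toReal hrρt
      have hsplit : ∫⁻ ξ, (‖𝓕 f ξ‖₊ : ℝ≥0∞) ^ q
          = (∫⁻ ξ in ball (0 : EuclideanSpace ℝ (Fin d)) r, (‖𝓕 f ξ‖₊ : ℝ≥0∞) ^ q)
            + ∫⁻ ξ in (ball (0 : EuclideanSpace ℝ (Fin d)) r)ᶜ, (‖𝓕 f ξ‖₊ : ℝ≥0∞) ^ q :=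
        (lintegral_add_compl _ measurableSet_ball).symm
      have hlow : (∫⁻ ξ in ball (0 : EuclideanSpace ℝ (Fin d)) r, (‖𝓕 f ξ‖₊ : ℝ≥0∞) ^ q)
          ≤ volume (ball (0 : EuclideanSpace ℝ (Fin d)) 1) *
            (L1e d f ^ (q - ν) * He d α f ^ ν) := by
        refine (low_bound hd hq0.le hA hr0.le).trans_eq ?_
        rw [hofr, ← ENNReal.rpow_mul,
          show (2/((d:ℝ)+2*α))*(d:ℝ) = ν by rw [hν]; ring, mul_assoc]
        congr 1
        calc L1e d f ^ q * ρ ^ ν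
            = L1e d f ^ q * ρ ^ ν * He d α f ^ (0:ℝ) := by
              rw [ENNReal.rpow_zero, mul_one]
          _ = L1e d f ^ (q - ν) * He d α f ^ (0 + ν) := abpow ha0 hat hb0 hbt q ν 0
          _ = L1e d f ^ (q - ν) * He d α f ^ ν := by rw [zero_add]
      have hhigh : (∫⁻ ξ in (ball (0 : EuclideanSpace ℝ (Fin d)) r)ᶜ, (‖𝓕 f ξ‖₊ : ℝ≥0∞) ^ q)
          ≤ L1e d f ^ (q - ν) * He d α f ^ ν := by
        refine (high_ge2 hq2 hα0 hA hat hr0).trans_eq ?_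
        rw [← hbJ, hofr, ← ENNReal.rpow_mul,
          show (2/((d:ℝ)+2*α)) * (-(2*α)) = ν - 2 by rw [hν]; field_simp; ring,
          abpow ha0 hat hb0 hbt, show q - 2 - (ν - 2) = q - ν by ring,
          show (2:ℝ) + (ν - 2) = ν by ring]
      calc ∫⁻ ξ, (‖𝓕 f ξ‖₊ : ℝ≥0∞) ^ q = _ + _ := hsplit
        _ ≤ volume (ball (0 : EuclideanSpace ℝ (Fin d)) 1) *
              (L1e d f ^ (q - ν) * He d α f ^ ν)
            + L1e d f ^ (q - ν) * He d α f ^ ν := add_le_add hlow hhigh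
        _ = _ := by ring

  obtain ⟨C₀, hC₀t, hkey⟩ := key
  refine ⟨(C₀ ^ (1/q)).toNNReal + 1, by positivity, fun f hf hbt => ?_⟩
  have hg := fourier_cont f hf
  by_cases hab : L1e d f = 0 ∨ He d α f = 0
  · -- degenerate : Fourier transform vanishes a.e.
    have hg0 : 𝓕 f =ᵐ[volume] 0 := by
      rcases hab with ha | hb
      · have hf0 : f =ᵐ[volume] 0 := by
          have h := (lintegral_eq_zero_iff' hf.aestronglyMeasurable.enorm).mp ha
          filter_upwards [h] with v hv
          simpa using hv
        refine Filter.Eventually.of_forall fun ξ => ?_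
        have h1 : ∫ v, ‖f v‖ = 0 := by
          rw [← integral_zero (EuclideanSpace ℝ (Fin d)) ℝ]
          apply integral_congr_ae
          filter_upwards [hf0] with v hv
          simp [hv]
        have h2 : ‖𝓕 f ξ‖ ≤ ∫ v, ‖f v‖ :=
          VectorFourier.norm_fourierIntegral_le_integral_norm _ _ _ f ξ
        rw [h1] at h2
        simpa using norm_le_zero_iff.mp h2
      · have hJ0 : ∫⁻ ξ, (‖ξ‖₊ : ℝ≥0∞) ^ (2 * α) * (‖𝓕 f ξ‖₊ : ℝ≥0∞) ^ (2 : ℝ) = 0 := by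
          have hHe : He d α f =
              (∫⁻ ξ, (‖ξ‖₊ : ℝ≥0∞) ^ (2 * α) * (‖𝓕 f ξ‖₊ : ℝ≥0∞) ^ (2 : ℝ)) ^ ((1:ℝ)/2) := rfl
          rw [hHe] at hb
          rcases ENNReal.rpow_eq_zero_iff.mp hb with ⟨h, _⟩ | ⟨_, h⟩
          · exact h
          · norm_num at h
        have hmeas2 : Measurable fun ξ : EuclideanSpace ℝ (Fin d) =>
            (‖ξ‖₊ : ℝ≥0∞) ^ (2 * α) * (‖𝓕 f ξ‖₊ : ℝ≥0∞) ^ (2 : ℝ) :=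
          ((measurable_nnnorm.coe_nnreal_ennreal).pow_const _).mul
            ((hg.measurable.nnnorm.coe_nnreal_ennreal).pow_const _)
        have hae := (lintegral_eq_zero_iff hmeas2).mp hJ0
        haveI := nontriv_euclidean hd
        haveI : NullSingletonClass (volume : Measure (EuclideanSpace ℝ (Fin d))) := by infer_instance
        have h0 : ∀ᵐ ξ : EuclideanSpace ℝ (Fin d) ∂volume, ξ ≠ 0 := by
          rw [ae_iff]
          simp only [ne_eq, not_not, Set.setOf_eq_eq_singleton]
          exact measure_singleton _
        filter_upwards [hae, h0] with ξ h1 h2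
        rcases mul_eq_zero.mp h1 with h | h
        · exfalso
          rcases ENNReal.rpow_eq_zero_iff.mp h with ⟨h3, _⟩ | ⟨h3, _⟩
          · exact h2 (by simpa using h3)
          · exact ENNReal.coe_ne_top h3
        · rcases ENNReal.rpow_eq_zero_iff.mp h with ⟨h3, _⟩ | ⟨h3, _⟩
          · simpa using h3
          · exact absurd h3 ENNReal.coe_ne_top
    refine ⟨⟨hg.aestronglyMeasurable, ?_⟩, ?_⟩ <;>
      rw [eLpNorm_congr_ae hg0, eLpNorm_zero]
    · simp
    · exact zero_le
  push_neg at hab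
  obtain ⟨ha0, hb0⟩ := hab
  have hat : L1e d f ≠ ⊤ := hf.2.ne
  have hbound := hkey f hf ha0 hb0 hbt
  have hrw2 : ν * (1/q) = 2 * (d : ℝ) / (q * ((d : ℝ) + 2 * α)) := by
    rw [hν, div_mul_div_comm, mul_one, mul_comm ((d : ℝ) + 2 * α) q]
  have hrw1 : (q - ν) * (1/q) = 1 - 2 * (d : ℝ) / (q * ((d : ℝ) + 2 * α)) := by
    rw [sub_mul, mul_one_div, div_self hq0.ne', hrw2]
  have hC₀q : C₀ ^ (1/q) ≠ ⊤ := ENNReal.rpow_ne_top_of_nonneg (by positivity) hC₀t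
  have hcoe : (((C₀ ^ (1/q)).toNNReal + 1 : ℝ≥0) : ℝ≥0∞) = C₀ ^ (1/q) + 1 := by
    push_cast [ENNReal.coe_toNNReal hC₀q]
    rfl
  have hmain : eLpNorm (𝓕 f) p volume ≤
      ((C₀ ^ (1/q)).toNNReal + 1 : ℝ≥0) *
        L1e d f ^ (1 - 2 * (d : ℝ) / (q * ((d : ℝ) + 2 * α))) *
        He d α f ^ (2 * (d : ℝ) / (q * ((d : ℝ) + 2 * α))) := by
    rw [eLpNorm_eq_lintegral_rpow_enorm_toReal hp0 hptop, hcoe]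
    calc (∫⁻ ξ, (‖𝓕 f ξ‖₊ : ℝ≥0∞) ^ q) ^ (1/q)
        ≤ (C₀ * (L1e d f ^ (q - ν) * He d α f ^ ν)) ^ (1/q) :=
          ENNReal.rpow_le_rpow hbound (by positivity)
      _ = C₀ ^ (1/q) * (L1e d f ^ ((q - ν) * (1/q)) * He d α f ^ (ν * (1/q))) := by
          rw [ENNReal.mul_rpow_of_nonneg _ _ (by positivity : (0:ℝ) ≤ 1/q),
            ENNReal.mul_rpow_of_nonneg _ _ (by positivity : (0:ℝ) ≤ 1/q),
            ← ENNReal.rpow_mul, ← ENNReal.rpow_mul]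
      _ ≤ (C₀ ^ (1/q) + 1) * (L1e d f ^ ((q - ν) * (1/q)) * He d α f ^ (ν * (1/q))) :=
          mul_le_mul_left le_self_add _
      _ = _ := by rw [hrw1, hrw2, mul_assoc]
  refine ⟨⟨hg.aestronglyMeasurable, lt_of_le_of_lt hmain ?_⟩, hmain⟩
  refine ENNReal.mul_lt_top (ENNReal.mul_lt_top ENNReal.coe_lt_top ?_) ?_
  · rw [lt_top_iff_ne_top]
    simp [ENNReal.rpow_eq_top_iff, ha0, hat]
  · rw [lt_top_iff_ne_top]
    simp [ENNReal.rpow_eq_top_iff, hb0, hbt]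
end

section
/- Let $d\ge 3$ and $a<d-1$. There exists a constant $C=C(a,d)$ such that for all $\xi,\zeta\in\mathbb{R}^d$ (not both zero), $\int_{\mathbb{S}^{d-1}}\bigl|\zeta-|\xi|\sigma\bigr|^{-a}\,d\sigma \le C\,(|\xi|+|\zeta|)^{-a}$, where $d\sigma$ is the surface measure on the unit sphere $\mathbb{S}^{d-1}\subset\mathbb{R}^d$. -/
open MeasureTheory FourierTransform ENNReal
open scoped NNReal

open Metric Set
open scoped RealInnerProductSpace

lemma euclid_ball_bd (m : ℕ) : ∃ K : ℝ≥0, ∀ ρ : ℝ≥0,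
    μH[(m:ℝ)] (closedBall (0 : EuclideanSpace ℝ (Fin m)) ρ) ≤ K * (ρ : ℝ≥0∞) ^ m := by
  set Km : ℝ≥0 := (Fintype.card (Fin m) : ℝ≥0) ^ ((1 / (2:ℝ≥0∞)).toReal) with hKm
  have hanti : AntilipschitzWith Km (WithLp.equiv 2 (Fin m → ℝ)) :=
    PiLp.antilipschitzWith_ofLp 2 (fun _ : Fin m => ℝ)
  have hlip1 : LipschitzWith 1 (WithLp.equiv 2 (Fin m → ℝ)) :=
    PiLp.lipschitzWith_ofLp 2 (fun _ : Fin m => ℝ)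
  have hlip : LipschitzWith Km ((WithLp.equiv 2 (Fin m → ℝ)).symm) := by
    intro x y
    have := hanti ((WithLp.equiv 2 (Fin m → ℝ)).symm x) ((WithLp.equiv 2 (Fin m → ℝ)).symm y)
    simpa using this
  refine ⟨Km ^ m * 2 ^ m, fun ρ => ?_⟩
  have hsub : closedBall (0 : EuclideanSpace ℝ (Fin m)) ρ ⊆
      (WithLp.equiv 2 (Fin m → ℝ)).symm '' (closedBall (0 : Fin m → ℝ) ρ) := by
    intro x hx
    refine ⟨WithLp.equiv 2 (Fin m → ℝ) x, ?_, by simp⟩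
    simp only [mem_closedBall, dist_zero_right] at hx ⊢
    have := hlip1.dist_le_mul x 0
    simpa [dist_zero_right] using this.trans (by simpa [dist_zero_right] using hx)
  calc μH[(m:ℝ)] (closedBall (0 : EuclideanSpace ℝ (Fin m)) ρ)
      ≤ μH[(m:ℝ)] ((WithLp.equiv 2 (Fin m → ℝ)).symm '' (closedBall (0 : Fin m → ℝ) ρ)) :=
        measure_mono hsub
    _ ≤ (Km : ℝ≥0∞) ^ (m:ℝ) * μH[(m:ℝ)] (closedBall (0 : Fin m → ℝ) ρ) :=
        hlip.hausdorffMeasure_image_le (by positivity) _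
    _ ≤ (Km : ℝ≥0∞) ^ (m:ℝ) * ((2:ℝ≥0∞) ^ m * (ρ:ℝ≥0∞) ^ m) := by
        gcongr
        have hμ : (μH[(m:ℝ)] : Measure (Fin m → ℝ)) = volume := by
          have := hausdorffMeasure_pi_real (ι := Fin m)
          simpa [Fintype.card_fin] using this
        rw [hμ, Real.volume_pi_closedBall _ ρ.coe_nonneg]
        rw [ENNReal.ofReal_pow (by positivity), Fintype.card_fin]
        rw [← mul_pow]
        gcongr
        rw [ENNReal.ofReal_mul (by norm_num)]
        simp [ENNReal.ofReal_coe_nnreal]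
    _ = (Km ^ m * 2 ^ m : ℝ≥0) * (ρ:ℝ≥0∞) ^ m := by
        rw [ENNReal.rpow_natCast]
        push_cast
        ring

lemma subspace_ball_bd (d m : ℕ) : ∃ K : ℝ≥0,
    ∀ (H : Submodule ℝ (EuclideanSpace ℝ (Fin d))), Module.finrank ℝ H = m → ∀ ρ : ℝ≥0,
    μH[(m:ℝ)] ((H : Set (EuclideanSpace ℝ (Fin d))) ∩ closedBall 0 ρ) ≤ K * (ρ : ℝ≥0∞) ^ m := by
  obtain ⟨K, hK⟩ := euclid_ball_bd m
  refine ⟨K, fun H hm ρ => ?_⟩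
  have : FiniteDimensional ℝ H := FiniteDimensional.finiteDimensional_submodule H
  -- identify the set as isometric image of closed ball in H
  have hset : (H : Set (EuclideanSpace ℝ (Fin d))) ∩ closedBall 0 ρ =
      (Subtype.val : H → EuclideanSpace ℝ (Fin d)) '' (closedBall (0 : H) ρ) := by
    ext x
    constructor
    · rintro ⟨hxH, hx⟩
      exact ⟨⟨x, hxH⟩, by simpa [mem_closedBall, dist_zero_right] using hx, rfl⟩
    · rintro ⟨⟨y, hy⟩, hyb, rfl⟩
      exact ⟨hy, by simpa [mem_closedBall, dist_zero_right] using hyb⟩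
  rw [hset]
  have hiso : Isometry (Subtype.val : H → EuclideanSpace ℝ (Fin d)) := isometry_subtype_coe
  rw [hiso.hausdorffMeasure_image (Or.inl (by positivity))]
  -- now use the linear isometry equiv to EuclideanSpace ℝ (Fin m)
  let e : H ≃ₗᵢ[ℝ] EuclideanSpace ℝ (Fin m) := by
    rw [← hm]; exact (stdOrthonormalBasis ℝ H).repr
  have himg : e '' (closedBall (0 : H) ρ) = closedBall (0 : EuclideanSpace ℝ (Fin m)) ρ := by
    have := e.toIsometryEquiv.image_closedBall (0 : H) ρ
    simpa using this
  have := e.toIsometryEquiv.hausdorffMeasure_image ((m:ℝ)) (closedBall (0 : H) ρ)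
  rw [show ⇑e.toIsometryEquiv = ⇑e from rfl, himg] at this
  rw [← this]
  exact hK ρ

lemma sqrt_est {s t : ℝ} (hs0 : 0 ≤ s) (hs : s ≤ 1/2) (ht0 : 0 ≤ t) (ht : t ≤ 1/2) :
    |Real.sqrt (1 - s^2) - Real.sqrt (1 - t^2)| ≤ |s - t| := by
  set u := Real.sqrt (1 - s^2) with hu
  set v := Real.sqrt (1 - t^2) with hv
  have hu2 : u^2 = 1 - s^2 := Real.sq_sqrt (by nlinarith)
  have hv2 : v^2 = 1 - t^2 := Real.sq_sqrt (by nlinarith)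
  have hu0 : 0 ≤ u := Real.sqrt_nonneg _
  have hv0 : 0 ≤ v := Real.sqrt_nonneg _
  have hup : 1/2 ≤ u := by nlinarith
  have hvp : 1/2 ≤ v := by nlinarith
  rw [abs_le]
  have h1 : s - t ≤ |s - t| := le_abs_self _
  have h2 : t - s ≤ |s - t| := by rw [abs_sub_comm]; exact le_abs_self _
  have h3 : (0:ℝ) ≤ |s - t| := abs_nonneg _
  constructor
  · rcases le_or_gt v u with h | h
    · nlinarith [mul_nonneg (sub_nonneg.2 h) (sub_nonneg.2 (by linarith : (1:ℝ) ≤ u + v))]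
    · nlinarith
  · rcases le_or_gt u v with h | h
    · nlinarith [mul_nonneg (sub_nonneg.2 h) (sub_nonneg.2 (by linarith : (1:ℝ) ≤ u + v))]
    · nlinarith

set_option maxHeartbeats 1000000 in
lemma small_cap_bd (d : ℕ) (hd : 3 ≤ d) : ∃ K : ℝ≥0, ∀ (q : EuclideanSpace ℝ (Fin d)),
    ‖q‖ = 1 → ∀ ρ : ℝ≥0, (ρ:ℝ) ≤ 1/2 →
    μH[((d:ℝ)-1)] (sphere (0 : EuclideanSpace ℝ (Fin d)) 1 ∩ closedBall q ρ) ≤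
      K * (ρ : ℝ≥0∞) ^ (d-1) := by
  classical
  obtain ⟨K0, hK0⟩ := subspace_ball_bd d (d-1)
  have hd1 : ((d-1 : ℕ) : ℝ) = (d:ℝ) - 1 := by
    have h1 : (1:ℕ) ≤ d := by omega
    push_cast [Nat.cast_sub h1]; ring
  refine ⟨2 ^ (d-1) * K0, fun q hq ρ hρ => ?_⟩
  set H : Submodule ℝ (EuclideanSpace ℝ (Fin d)) := (ℝ ∙ q)ᗮ with hH
  have hq0 : q ≠ 0 := by intro h; rw [h] at hq; simp at hq
  have hrank : Module.finrank ℝ H = d - 1 := by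
    have h1 : Module.finrank ℝ (ℝ ∙ q) = 1 := finrank_span_singleton hq0
    have h2 := Submodule.finrank_add_finrank_orthogonal (K := (ℝ ∙ q))
    rw [h1, finrank_euclideanSpace_fin, ← hH] at h2
    omega
  set g : EuclideanSpace ℝ (Fin d) → EuclideanSpace ℝ (Fin d) :=
    fun w => Real.sqrt (1 - ‖w‖^2) • q + w with hg
  set s : Set (EuclideanSpace ℝ (Fin d)) := (H : Set (EuclideanSpace ℝ (Fin d))) ∩ closedBall 0 ρ
    with hs
  have hlip : LipschitzOnWith 2 g s := by
    apply LipschitzOnWith.of_dist_le_mul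
    intro x hx y hy
    have hxρ : ‖x‖ ≤ 1/2 := by
      have := hx.2; rw [mem_closedBall, dist_zero_right] at this; linarith [this.trans hρ]
    have hyρ : ‖y‖ ≤ 1/2 := by
      have := hy.2; rw [mem_closedBall, dist_zero_right] at this; linarith [this.trans hρ]
    rw [dist_eq_norm, dist_eq_norm]
    have hgd : g x - g y = (Real.sqrt (1 - ‖x‖^2) - Real.sqrt (1 - ‖y‖^2)) • q + (x - y) := by
      simp only [hg]; module
    rw [hgd]
    have h1 : ‖(Real.sqrt (1 - ‖x‖^2) - Real.sqrt (1 - ‖y‖^2)) • q + (x - y)‖ ≤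
        |Real.sqrt (1 - ‖x‖^2) - Real.sqrt (1 - ‖y‖^2)| * ‖q‖ + ‖x - y‖ := by
      refine (norm_add_le _ _).trans ?_
      rw [norm_smul, Real.norm_eq_abs]
    rw [hq, mul_one] at h1
    have h2 : |Real.sqrt (1 - ‖x‖^2) - Real.sqrt (1 - ‖y‖^2)| ≤ |‖x‖ - ‖y‖| :=
      sqrt_est (norm_nonneg _) hxρ (norm_nonneg _) hyρ
    have h3 : |‖x‖ - ‖y‖| ≤ ‖x - y‖ := abs_norm_sub_norm_le x y
    have h4 : ((2:ℝ≥0):ℝ) = 2 := by norm_num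
    rw [h4]
    nlinarith [norm_nonneg (x - y)]
  have hsub : sphere (0 : EuclideanSpace ℝ (Fin d)) 1 ∩ closedBall q ρ ⊆ g '' s := by
    rintro σ ⟨hσS, hσB⟩
    rw [mem_sphere_iff_norm, sub_zero] at hσS
    rw [mem_closedBall, dist_eq_norm] at hσB
    set c : ℝ := ⟪q, σ⟫ with hc
    have h1 : ‖σ - q‖^2 = ‖σ‖^2 - 2 * ⟪σ, q⟫ + ‖q‖^2 := norm_sub_sq_real σ q
    have h2 : ⟪σ, q⟫ = c := by rw [hc, real_inner_comm]
    rw [hσS, hq, h2] at h1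
    have hnsq : ‖σ - q‖^2 = 2 - 2*c := by rw [h1]; ring
    have hcle : c ≤ 1 := by
      have := real_inner_le_norm q σ
      rw [hq, hσS] at this; simpa [← hc] using this
    have hcge : 1/2 ≤ c := by
      have hρ2 : ‖σ - q‖^2 ≤ (1/2)^2 := by
        have h : ‖σ - q‖ ≤ 1/2 := hσB.trans hρ
        nlinarith [norm_nonneg (σ - q)]
      nlinarith
    set w : EuclideanSpace ℝ (Fin d) := σ - c • q with hw
    have hqq : ⟪q, q⟫ = 1 := by
      rw [real_inner_self_eq_norm_sq, hq]; norm_num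
    have hwH : w ∈ H := by
      rw [hH, Submodule.mem_orthogonal_singleton_iff_inner_right]
      rw [hw, inner_sub_right, real_inner_smul_right, hqq, ← hc]
      ring
    have h5 : ‖w‖^2 = ‖σ‖^2 - 2 * ⟪σ, c • q⟫ + ‖c • q‖^2 := norm_sub_sq_real σ (c • q)
    have h6 : ⟪σ, c • q⟫ = c * c := by rw [real_inner_smul_right, h2]
    have h7 : ‖c • q‖ = |c| := by rw [norm_smul, Real.norm_eq_abs, hq, mul_one]
    have hnw : ‖w‖^2 = 1 - c^2 := by
      rw [h5, h6, h7, hσS, sq_abs]; ring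
    have hwρ : ‖w‖ ≤ ρ := by
      have hb1 : ‖w‖^2 ≤ ‖σ - q‖^2 := by
        rw [hnw, hnsq]; nlinarith [sq_nonneg (1-c)]
      have hb2 : ‖σ - q‖^2 ≤ (ρ:ℝ)^2 := pow_le_pow_left₀ (norm_nonneg _) hσB 2
      exact le_of_pow_le_pow_left₀ (by norm_num) ρ.coe_nonneg (hb1.trans hb2)
    refine ⟨w, ⟨hwH, by rwa [mem_closedBall, dist_zero_right]⟩, ?_⟩
    have : g w = Real.sqrt (1 - ‖w‖^2) • q + w := rfl
    rw [this, show 1 - ‖w‖^2 = c^2 by rw [hnw]; ring,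
      Real.sqrt_sq (by linarith : (0:ℝ) ≤ c), hw]
    abel
  calc μH[((d:ℝ)-1)] (sphere (0 : EuclideanSpace ℝ (Fin d)) 1 ∩ closedBall q ρ)
      ≤ μH[((d:ℝ)-1)] (g '' s) := measure_mono hsub
    _ ≤ (2:ℝ≥0∞) ^ ((d:ℝ)-1) * μH[((d:ℝ)-1)] s := by
        have h3d : (3:ℝ) ≤ (d:ℝ) := by exact_mod_cast hd
        have := hlip.hausdorffMeasure_image_le (d := (d:ℝ)-1) (by linarith)
        simpa using this
    _ ≤ (2:ℝ≥0∞) ^ ((d:ℝ)-1) * (K0 * (ρ : ℝ≥0∞) ^ (d-1)) := by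
        gcongr
        have := hK0 H hrank ρ
        rwa [hd1] at this
    _ = (2 ^ (d-1) * K0 : ℝ≥0) * (ρ : ℝ≥0∞) ^ (d-1) := by
        rw [← hd1, ENNReal.rpow_natCast]
        push_cast
        ring

lemma sphere_meas_fin (d : ℕ) (hd : 3 ≤ d) :
    μH[((d:ℝ)-1)] (sphere (0 : EuclideanSpace ℝ (Fin d)) 1) < ∞ := by
  obtain ⟨K, hK⟩ := small_cap_bd d hd
  have hcpt : IsCompact (sphere (0 : EuclideanSpace ℝ (Fin d)) 1) := isCompact_sphere 0 1
  have hcov : sphere (0 : EuclideanSpace ℝ (Fin d)) 1 ⊆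
      ⋃ q ∈ sphere (0 : EuclideanSpace ℝ (Fin d)) 1, ball q (1/4) := by
    intro x hx
    exact mem_biUnion hx (by simp only [mem_ball, dist_self]; norm_num)
  obtain ⟨b, hbsub, hbfin, hbcov⟩ := hcpt.elim_finite_subcover_image
    (fun q _ => isOpen_ball) hcov
  calc μH[((d:ℝ)-1)] (sphere (0 : EuclideanSpace ℝ (Fin d)) 1)
      ≤ μH[((d:ℝ)-1)] (⋃ q ∈ b, sphere (0 : EuclideanSpace ℝ (Fin d)) 1 ∩ ball q (1/4)) := by
        apply measure_mono
        intro x hx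
        obtain ⟨q, hq, hxq⟩ := mem_iUnion₂.1 (hbcov hx)
        exact mem_iUnion₂.2 ⟨q, hq, hx, hxq⟩
    _ ≤ ∑' q : b, μH[((d:ℝ)-1)] (sphere (0 : EuclideanSpace ℝ (Fin d)) 1 ∩ ball q (1/4)) := by
        have : Countable b := hbfin.countable
        rw [biUnion_eq_iUnion]
        exact measure_iUnion_le _
    _ < ∞ := by
        have hcb : Countable b := hbfin.countable
        have : Fintype b := hbfin.fintype
        rw [tsum_fintype]
        apply ENNReal.sum_lt_top.2
        intro q _
        have hq1 : ‖(q:EuclideanSpace ℝ (Fin d))‖ = 1 := by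
          have := hbsub q.2
          rwa [mem_sphere_iff_norm, sub_zero] at this
        calc μH[((d:ℝ)-1)] (sphere (0 : EuclideanSpace ℝ (Fin d)) 1 ∩ ball (q:EuclideanSpace ℝ (Fin d)) (1/4))
            ≤ μH[((d:ℝ)-1)] (sphere (0 : EuclideanSpace ℝ (Fin d)) 1 ∩ closedBall (q:EuclideanSpace ℝ (Fin d)) ((1/4 : ℝ≥0) : ℝ)) := by
              apply measure_mono
              apply inter_subset_inter_right
              refine ball_subset_closedBall.trans ?_
              norm_num
          _ ≤ K * ((1/4 : ℝ≥0) : ℝ≥0∞) ^ (d-1) := hK _ hq1 _ (by norm_num)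
          _ < ∞ := by
              apply ENNReal.mul_lt_top coe_lt_top
              exact ENNReal.pow_lt_top coe_lt_top

lemma cap_bd (d : ℕ) (hd : 3 ≤ d) : ∃ K : ℝ≥0, ∀ (p : EuclideanSpace ℝ (Fin d)) (ρ : ℝ≥0),
    μH[((d:ℝ)-1)] (sphere (0 : EuclideanSpace ℝ (Fin d)) 1 ∩ closedBall p ρ) ≤
      K * (ρ : ℝ≥0∞) ^ (d-1) := by
  obtain ⟨K0, hK0⟩ := small_cap_bd d hd
  set mS := μH[((d:ℝ)-1)] (sphere (0 : EuclideanSpace ℝ (Fin d)) 1) with hmS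
  have hfin := sphere_meas_fin d hd
  refine ⟨K0 * 2^(d-1) + mS.toNNReal * 4^(d-1), fun p ρ => ?_⟩
  rcases le_or_gt (ρ:ℝ) (1/4) with hρ | hρ
  · -- small radius
    rcases eq_empty_or_nonempty (sphere (0 : EuclideanSpace ℝ (Fin d)) 1 ∩ closedBall p ρ)
      with he | ⟨σ₀, hσ₀S, hσ₀B⟩
    · rw [he]; simp
    · rw [mem_sphere_iff_norm, sub_zero] at hσ₀S
      rw [mem_closedBall, dist_eq_norm] at hσ₀B
      have hp : (3/4 : ℝ) ≤ ‖p‖ := by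
        have := norm_sub_norm_le σ₀ p
        rw [hσ₀S] at this
        linarith [(abs_le.1 (abs_norm_sub_norm_le σ₀ p)).1]
      have hp0 : p ≠ 0 := by
        intro h; rw [h, norm_zero] at hp; linarith
      set q : EuclideanSpace ℝ (Fin d) := ‖p‖⁻¹ • p with hqdef
      have hq1 : ‖q‖ = 1 := by
        rw [hqdef, norm_smul, norm_inv, norm_norm, inv_mul_cancel₀ (by positivity)]
      have hpq : ‖p - q‖ ≤ ρ := by
        have h1 : p - q = (1 - ‖p‖⁻¹) • p := by rw [hqdef]; module
        rw [h1, norm_smul, Real.norm_eq_abs]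
        have h2 : |1 - ‖p‖⁻¹| * ‖p‖ = |‖p‖ - 1| := by
          rw [← abs_of_nonneg (norm_nonneg p), ← abs_mul]
          rw [abs_of_nonneg (norm_nonneg p)]
          congr 1
          field_simp
        rw [h2]
        have h3 : |‖p‖ - 1| ≤ ‖p - σ₀‖ := by
          rw [← hσ₀S]
          exact abs_norm_sub_norm_le p σ₀
        rw [← norm_neg (p - σ₀), neg_sub] at h3
        linarith
      have hsub : sphere (0 : EuclideanSpace ℝ (Fin d)) 1 ∩ closedBall p ρ ⊆
          sphere (0 : EuclideanSpace ℝ (Fin d)) 1 ∩ closedBall q (2*ρ : ℝ≥0) := by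
        rintro σ ⟨hσS, hσB⟩
        rw [mem_closedBall, dist_eq_norm] at hσB
        refine ⟨hσS, ?_⟩
        rw [mem_closedBall, dist_eq_norm]
        have : σ - q = (σ - p) + (p - q) := by abel
        rw [this]
        refine (norm_add_le _ _).trans ?_
        push_cast
        linarith
      calc μH[((d:ℝ)-1)] (sphere (0 : EuclideanSpace ℝ (Fin d)) 1 ∩ closedBall p ρ)
          ≤ μH[((d:ℝ)-1)] (sphere (0 : EuclideanSpace ℝ (Fin d)) 1 ∩ closedBall q (2*ρ : ℝ≥0)) :=
            measure_mono hsub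
        _ ≤ K0 * ((2*ρ : ℝ≥0) : ℝ≥0∞) ^ (d-1) := hK0 q hq1 _ (by push_cast; linarith)
        _ ≤ (K0 * 2^(d-1) + mS.toNNReal * 4^(d-1) : ℝ≥0) * (ρ : ℝ≥0∞) ^ (d-1) := by
            push_cast
            rw [mul_pow]
            calc (K0:ℝ≥0∞) * ((2:ℝ≥0∞)^(d-1) * (ρ:ℝ≥0∞)^(d-1))
                = (K0:ℝ≥0∞) * (2:ℝ≥0∞)^(d-1) * (ρ:ℝ≥0∞)^(d-1) := by ring
              _ ≤ ((K0:ℝ≥0∞) * (2:ℝ≥0∞)^(d-1) + (mS.toNNReal:ℝ≥0∞) * (4:ℝ≥0∞)^(d-1)) * (ρ:ℝ≥0∞)^(d-1) := by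
                  gcongr
                  exact le_self_add
  · -- large radius
    have h1 : (1:ℝ≥0∞) ≤ ((4:ℝ≥0∞) * ρ) ^ (d-1) := by
      apply one_le_pow_of_one_le'
      have : (1:ℝ≥0) ≤ 4 * ρ := by
        rw [← NNReal.coe_le_coe]
        push_cast
        linarith
      calc (1:ℝ≥0∞) ≤ ((4*ρ : ℝ≥0) : ℝ≥0∞) := by exact_mod_cast this
        _ = (4:ℝ≥0∞) * ρ := by push_cast; ring
    calc μH[((d:ℝ)-1)] (sphere (0 : EuclideanSpace ℝ (Fin d)) 1 ∩ closedBall p ρ)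
        ≤ mS := measure_mono inter_subset_left
      _ = (mS.toNNReal : ℝ≥0∞) := (ENNReal.coe_toNNReal hfin.ne).symm
      _ = (mS.toNNReal : ℝ≥0∞) * 1 := (mul_one _).symm
      _ ≤ (mS.toNNReal : ℝ≥0∞) * ((4:ℝ≥0∞) * ρ)^(d-1) := by gcongr
      _ ≤ (K0 * 2^(d-1) + mS.toNNReal * 4^(d-1) : ℝ≥0) * (ρ : ℝ≥0∞) ^ (d-1) := by
          rw [mul_pow]
          push_cast
          calc (mS.toNNReal : ℝ≥0∞) * ((4:ℝ≥0∞)^(d-1) * (ρ:ℝ≥0∞)^(d-1))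
              = (mS.toNNReal:ℝ≥0∞) * (4:ℝ≥0∞)^(d-1) * (ρ:ℝ≥0∞)^(d-1) := by ring
            _ ≤ ((K0:ℝ≥0∞) * (2:ℝ≥0∞)^(d-1) + (mS.toNNReal:ℝ≥0∞) * (4:ℝ≥0∞)^(d-1)) * (ρ:ℝ≥0∞)^(d-1) := by
                gcongr
                exact le_add_self

lemma nn_neg_rpow_le {a : ℝ} (ha0 : 0 ≤ a) {c x : ℝ≥0} (hc : c ≠ 0) (h : c ≤ x) :
    x ^ (-a) ≤ c ^ (-a) := by
  rw [NNReal.rpow_neg, NNReal.rpow_neg]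
  have h1 : c ^ a ≤ x ^ a := NNReal.rpow_le_rpow h ha0
  have h2 : 0 < c ^ a := NNReal.rpow_pos (zero_lt_iff.mpr hc)
  gcongr

lemma half_pow_neg_rpow (a : ℝ) (k : ℕ) :
    ((1/2 : ℝ≥0) ^ k) ^ (-a) = ((2:ℝ≥0) ^ a) ^ k := by
  have h1 : (1/2 : ℝ≥0) ^ k = ((2:ℝ≥0) ^ k)⁻¹ := by
    rw [one_div, inv_pow]
  rw [h1, NNReal.inv_rpow, NNReal.rpow_neg, inv_inv, ← NNReal.rpow_natCast (2:ℝ≥0) k,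
    ← NNReal.rpow_mul, mul_comm, NNReal.rpow_mul, NNReal.rpow_natCast]

set_option maxHeartbeats 2000000 in
lemma main_norm (d : ℕ) (hd : 3 ≤ d) (a : ℝ) (ha : a < (d:ℝ) - 1) (ha0 : 0 < a) :
    ∃ C : ℝ≥0, ∀ (r : ℝ) (ζ : EuclideanSpace ℝ (Fin d)), 0 ≤ r → r + ‖ζ‖ = 1 →
    ∫⁻ σ in sphere (0 : EuclideanSpace ℝ (Fin d)) 1,
      (‖ζ - r • σ‖₊ : ℝ≥0∞) ^ (-a) ∂μH[(d:ℝ)-1] ≤ C := by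
  obtain ⟨Kc, hKc⟩ := cap_bd d hd
  have hfinS := sphere_meas_fin d hd
  have hd1 : ((d-1 : ℕ) : ℝ) = (d:ℝ) - 1 := by
    have h1 : (1:ℕ) ≤ d := by omega
    push_cast [Nat.cast_sub h1]; ring
  set w : ℝ≥0 := (2:ℝ≥0) ^ a * (1/2 : ℝ≥0) ^ (d-1) with hw
  have hw1 : w < 1 := by
    have h1 : (2:ℝ≥0) ^ a < (2:ℝ≥0) ^ ((d:ℝ)-1) :=
      NNReal.rpow_lt_rpow_of_exponent_lt one_lt_two ha
    have h2 : (2:ℝ≥0) ^ ((d:ℝ)-1) = (2:ℝ≥0) ^ (d-1 : ℕ) := by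
      rw [← hd1, NNReal.rpow_natCast]
    have h3 : (1/2 : ℝ≥0) ^ (d-1) = ((2:ℝ≥0) ^ (d-1:ℕ))⁻¹ := by rw [one_div, inv_pow]
    rw [hw, h3, ← div_eq_mul_inv, div_lt_one (by positivity)]
    rw [h2] at h1
    exact h1
  set c0 : ℝ≥0 := ((2:ℝ≥0) ^ a) ^ 3 * Kc with hc0
  set cA : ℝ≥0 := (1/4 : ℝ≥0) ^ (-a) with hcA
  set Btot : ℝ≥0∞ := cA * μH[((d:ℝ)-1)] (sphere (0 : EuclideanSpace ℝ (Fin d)) 1)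
    + (c0 : ℝ≥0∞) * (1 - (w:ℝ≥0∞))⁻¹ with hBtot
  have hBfin : Btot ≠ ∞ := by
    rw [hBtot]
    apply ENNReal.add_ne_top.2
    constructor
    · exact (ENNReal.mul_lt_top coe_lt_top hfinS).ne
    · apply (ENNReal.mul_lt_top coe_lt_top _).ne
      rw [lt_top_iff_ne_top]
      apply ENNReal.inv_ne_top.2
      rw [Ne, tsub_eq_zero_iff_le]
      exact fun h => absurd (ENNReal.coe_lt_one_iff.2 hw1) (not_lt.2 h)
  refine ⟨Btot.toNNReal, fun r ζ hr hsum => ?_⟩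
  rw [ENNReal.coe_toNNReal hBfin]
  set g : EuclideanSpace ℝ (Fin d) → ℝ := fun σ => ‖ζ - r • σ‖ with hg
  have hgcont : Continuous g := (continuous_const.sub (continuous_id.const_smul r)).norm
  set A : Set (EuclideanSpace ℝ (Fin d)) := g ⁻¹' Ici (1/4) with hA
  set Z : Set (EuclideanSpace ℝ (Fin d)) := g ⁻¹' {0} with hZ
  set B : ℕ → Set (EuclideanSpace ℝ (Fin d)) :=
    fun k => g ⁻¹' Icc ((1/2:ℝ)^(k+3)) ((1/2:ℝ)^(k+2)) with hB
  have hAm : MeasurableSet A := (isClosed_Ici.preimage hgcont).measurableSet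
  have hZm : MeasurableSet Z := (isClosed_singleton.preimage hgcont).measurableSet
  have hBm : ∀ k, MeasurableSet (B k) :=
    fun k => (isClosed_Icc.preimage hgcont).measurableSet
  have hUm : MeasurableSet (A ∪ (Z ∪ ⋃ k, B k)) :=
    hAm.union (hZm.union (MeasurableSet.iUnion hBm))
  have hcover : sphere (0 : EuclideanSpace ℝ (Fin d)) 1 ⊆ A ∪ (Z ∪ ⋃ k, B k) := by
    intro σ _
    rcases le_or_gt (1/4 : ℝ) (g σ) with h | h
    · exact Or.inl h
    rcases eq_or_lt_of_le (norm_nonneg (ζ - r • σ)) with h0 | h0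
    · exact Or.inr (Or.inl h0.symm)
    have hex : ∃ n : ℕ, (1/2:ℝ)^n < g σ :=
      exists_pow_lt_of_lt_one h0 (by norm_num)
    have hspec : (1/2:ℝ)^(Nat.find hex) < g σ := Nat.find_spec hex
    have hge3 : 3 ≤ Nat.find hex := by
      by_contra hcon
      push_neg at hcon
      have h2 : (1/2:ℝ)^2 ≤ (1/2:ℝ)^(Nat.find hex) :=
        pow_le_pow_of_le_one (by norm_num) (by norm_num) (by omega)
      have h4 : (1/2:ℝ)^2 = 1/4 := by norm_num
      linarith
    have hprev : ¬ ((1/2:ℝ)^(Nat.find hex - 1) < g σ) := Nat.find_min hex (by omega)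
    refine Or.inr (Or.inr (mem_iUnion.2 ⟨Nat.find hex - 3, ?_, ?_⟩))
    · have e3 : Nat.find hex - 3 + 3 = Nat.find hex := by omega
      rw [e3]; exact hspec.le
    · have e2 : Nat.find hex - 3 + 2 = Nat.find hex - 1 := by omega
      rw [e2]; linarith [not_lt.1 hprev]
  have hpt : ∀ (c : ℝ≥0), c ≠ 0 → ∀ σ : EuclideanSpace ℝ (Fin d), (c:ℝ) ≤ g σ →
      (‖ζ - r • σ‖₊ : ℝ≥0∞) ^ (-a) ≤ ((c ^ (-a) : ℝ≥0) : ℝ≥0∞) := by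
    intro c hc σ hσ
    have hle : c ≤ ‖ζ - r • σ‖₊ := by
      rw [← NNReal.coe_le_coe, coe_nnnorm]
      exact hσ
    have hne : ‖ζ - r • σ‖₊ ≠ 0 := by
      intro h; rw [h] at hle
      exact hc (le_antisymm (by simpa using hle) (zero_le : 0 ≤ c))
    rw [← ENNReal.coe_rpow_of_ne_zero hne]
    exact_mod_cast nn_neg_rpow_le ha0.le hc hle
  set ν := μH[((d:ℝ)-1)].restrict (sphere (0 : EuclideanSpace ℝ (Fin d)) 1) with hν
  -- A part
  have hApart : ∫⁻ σ in A, (‖ζ - r • σ‖₊ : ℝ≥0∞) ^ (-a) ∂ν ≤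
      (cA : ℝ≥0∞) * μH[((d:ℝ)-1)] (sphere (0 : EuclideanSpace ℝ (Fin d)) 1) := by
    calc ∫⁻ σ in A, (‖ζ - r • σ‖₊ : ℝ≥0∞) ^ (-a) ∂ν
        ≤ ∫⁻ _ in A, ((cA : ℝ≥0) : ℝ≥0∞) ∂ν := by
          refine setLIntegral_mono' hAm fun σ hσ => ?_
          have hc : ((1/4 : ℝ≥0) : ℝ) ≤ g σ := by
            push_cast; exact hσ
          exact hpt (1/4) (by norm_num) σ hc
      _ = (cA : ℝ≥0∞) * ν A := setLIntegral_const _ _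
      _ ≤ (cA : ℝ≥0∞) * μH[((d:ℝ)-1)] (sphere (0 : EuclideanSpace ℝ (Fin d)) 1) :=
          mul_le_mul_right (by
            rw [hν, Measure.restrict_apply hAm]
            exact measure_mono inter_subset_right) _
  -- Z part
  have hZpart : ∫⁻ σ in Z, (‖ζ - r • σ‖₊ : ℝ≥0∞) ^ (-a) ∂ν = 0 := by
    have hz : ν Z = 0 := by
      rw [hν, Measure.restrict_apply hZm]
      rcases eq_or_lt_of_le hr with h0 | h0
      · have hζ : ‖ζ‖ = 1 := by rw [← h0] at hsum; linarith
        have hze : Z = ∅ := by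
          ext σ
          simp only [hZ, mem_preimage, mem_singleton_iff, mem_empty_iff_false, iff_false, hg]
          rw [← h0, zero_smul, sub_zero, hζ]
          norm_num
        rw [hze, empty_inter]
        exact measure_empty
      · have hsub : Z ⊆ {r⁻¹ • ζ} := by
          intro σ hσ
          rw [hZ, mem_preimage, mem_singleton_iff, hg] at hσ
          have h1 : ζ - r • σ = 0 := by rwa [norm_eq_zero] at hσ
          have h2 : ζ = r • σ := by rwa [sub_eq_zero] at h1
          rw [mem_singleton_iff, h2, smul_smul, inv_mul_cancel₀ (ne_of_gt h0), one_smul]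
        haveI : NullSingletonClass (μH[((d:ℝ)-1)] : Measure (EuclideanSpace ℝ (Fin d))) := by
          apply Measure.nullSingletonClass_hausdorff
          have : (3:ℝ) ≤ (d:ℝ) := by exact_mod_cast hd
          linarith
        exact measure_mono_null (fun x hx => hsub hx.1) (measure_singleton _)
    exact setLIntegral_measure_zero _ _ hz
  -- B k measure bound
  have hνB : ∀ k : ℕ, ν (B k) ≤ (Kc:ℝ≥0∞) * (((2/3 * (1/2)^k : ℝ≥0)) : ℝ≥0∞)^(d-1) := by
    intro k
    rw [hν, Measure.restrict_apply (hBm k)]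
    rcases eq_empty_or_nonempty (B k ∩ sphere (0 : EuclideanSpace ℝ (Fin d)) 1)
      with he | ⟨σ₀, hσ₀B, hσ₀S⟩
    · rw [he]; simp
    have hupper : ∀ σ : EuclideanSpace ℝ (Fin d), σ ∈ B k → g σ ≤ 1/4 := by
      intro σ hσ
      have h1 : (1/2:ℝ)^(k+2) ≤ (1/2:ℝ)^2 :=
        pow_le_pow_of_le_one (by norm_num) (by norm_num) (by omega)
      have h2 : (1/2:ℝ)^2 = 1/4 := by norm_num
      have := hσ.2
      linarith
    have hσ₀n : ‖σ₀‖ = 1 := by rwa [mem_sphere_iff_norm, sub_zero] at hσ₀S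
    have hr38 : 3/8 ≤ r := by
      have h1 : g σ₀ ≤ 1/4 := hupper σ₀ hσ₀B
      have h2 : ‖ζ‖ - ‖ζ - r • σ₀‖ ≤ ‖r • σ₀‖ := by
        have h3 := norm_sub_norm_le ζ (ζ - r • σ₀)
        have h4 : ζ - (ζ - r • σ₀) = r • σ₀ := by abel
        rwa [h4] at h3
      rw [norm_smul, Real.norm_eq_abs, abs_of_nonneg hr, hσ₀n, mul_one] at h2
      have h5 : g σ₀ = ‖ζ - r • σ₀‖ := rfl
      linarith
    have hrpos : 0 < r := by linarith
    have hsub2 : B k ∩ sphere (0 : EuclideanSpace ℝ (Fin d)) 1 ⊆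
        sphere (0 : EuclideanSpace ℝ (Fin d)) 1 ∩
          closedBall (r⁻¹ • ζ) ((2/3 * (1/2)^k : ℝ≥0) : ℝ) := by
      rintro σ ⟨hσB, hσS⟩
      refine ⟨hσS, ?_⟩
      rw [mem_closedBall, dist_eq_norm]
      have h1 : σ - r⁻¹ • ζ = r⁻¹ • (r • σ - ζ) := by
        rw [smul_sub, smul_smul, inv_mul_cancel₀ hrpos.ne', one_smul]
      rw [h1, norm_smul, Real.norm_eq_abs, abs_of_pos (inv_pos.2 hrpos)]
      have h2 : ‖r • σ - ζ‖ = g σ := by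
        rw [hg]; exact norm_sub_rev _ _
      rw [h2]
      have h3 : r⁻¹ ≤ 8/3 := by
        rw [show (8:ℝ)/3 = (3/8 : ℝ)⁻¹ by norm_num]
        exact inv_anti₀ (by norm_num) hr38
      have h4 : g σ ≤ (1/2:ℝ)^(k+2) := hσB.2
      have h5 : (0:ℝ) ≤ g σ := norm_nonneg _
      have h6 : ((2/3 * (1/2)^k : ℝ≥0) : ℝ) = 2/3 * (1/2:ℝ)^k := by push_cast; ring
      rw [h6]
      calc r⁻¹ * g σ ≤ (8/3) * (1/2:ℝ)^(k+2) := by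
            apply mul_le_mul h3 h4 h5 (by norm_num)
        _ = 2/3 * (1/2:ℝ)^k := by rw [pow_add]; ring
    calc μH[((d:ℝ)-1)] (B k ∩ sphere (0 : EuclideanSpace ℝ (Fin d)) 1)
        ≤ μH[((d:ℝ)-1)] (sphere (0 : EuclideanSpace ℝ (Fin d)) 1 ∩
            closedBall (r⁻¹ • ζ) ((2/3 * (1/2)^k : ℝ≥0) : ℝ)) := measure_mono hsub2
      _ ≤ (Kc:ℝ≥0∞) * (((2/3 * (1/2)^k : ℝ≥0)) : ℝ≥0∞)^(d-1) := hKc _ _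
  -- B sum
  have hBsum : ∫⁻ σ in ⋃ k, B k, (‖ζ - r • σ‖₊ : ℝ≥0∞) ^ (-a) ∂ν ≤
      (c0 : ℝ≥0∞) * (1 - (w:ℝ≥0∞))⁻¹ := by
    refine (lintegral_iUnion_le _ _).trans ?_
    have hterm : ∀ k : ℕ, ∫⁻ σ in B k, (‖ζ - r • σ‖₊ : ℝ≥0∞) ^ (-a) ∂ν ≤
        (c0 : ℝ≥0∞) * ((w : ℝ≥0∞))^k := by
      intro k
      calc ∫⁻ σ in B k, (‖ζ - r • σ‖₊ : ℝ≥0∞) ^ (-a) ∂ν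
          ≤ ∫⁻ _ in B k, ((((1/2:ℝ≥0)^(k+3)) ^ (-a) : ℝ≥0) : ℝ≥0∞) ∂ν := by
            refine setLIntegral_mono' (hBm k) fun σ hσ => ?_
            have hc : (((1/2:ℝ≥0)^(k+3) : ℝ≥0) : ℝ) ≤ g σ := by
              push_cast; exact hσ.1
            exact hpt _ (by positivity) σ hc
        _ = ((((1/2:ℝ≥0)^(k+3)) ^ (-a) : ℝ≥0) : ℝ≥0∞) * ν (B k) := setLIntegral_const _ _
        _ ≤ ((((2:ℝ≥0)^a)^(k+3) : ℝ≥0) : ℝ≥0∞) *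
              ((Kc:ℝ≥0∞) * (((2/3 * (1/2)^k : ℝ≥0)) : ℝ≥0∞)^(d-1)) := by
            rw [half_pow_neg_rpow]
            exact mul_le_mul_right (hνB k) _
        _ ≤ (c0 : ℝ≥0∞) * ((w : ℝ≥0∞))^k := by
            have hρ : (2/3 * (1/2)^k : ℝ≥0)^(d-1) ≤ (((1/2:ℝ≥0))^(d-1))^k := by
              calc (2/3 * (1/2)^k : ℝ≥0)^(d-1) ≤ ((1/2:ℝ≥0)^k)^(d-1) := by
                    apply pow_le_pow_left₀ zero_le
                    calc (2/3 * (1/2)^k : ℝ≥0) ≤ 1 * (1/2:ℝ≥0)^k := by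
                          apply mul_le_mul_left
                          rw [← NNReal.coe_le_coe]
                          norm_num
                      _ = (1/2:ℝ≥0)^k := one_mul _
                _ = (((1/2:ℝ≥0))^(d-1))^k := by rw [← pow_mul, ← pow_mul, mul_comm]
            have hmain : ((2:ℝ≥0)^a)^(k+3) * (Kc * (2/3 * (1/2)^k : ℝ≥0)^(d-1)) ≤ c0 * w^k := by
              calc ((2:ℝ≥0)^a)^(k+3) * (Kc * (2/3 * (1/2)^k : ℝ≥0)^(d-1))
                  = (((2:ℝ≥0)^a)^3 * Kc) * (((2:ℝ≥0)^a)^k * (2/3 * (1/2)^k : ℝ≥0)^(d-1)) := by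
                    rw [pow_add]; ring
                _ ≤ (((2:ℝ≥0)^a)^3 * Kc) * (((2:ℝ≥0)^a)^k * (((1/2:ℝ≥0))^(d-1))^k) := by
                    gcongr
                _ = c0 * w^k := by rw [hc0, hw, mul_pow]
            exact_mod_cast hmain
    calc ∑' k, ∫⁻ σ in B k, (‖ζ - r • σ‖₊ : ℝ≥0∞) ^ (-a) ∂ν
        ≤ ∑' k : ℕ, (c0 : ℝ≥0∞) * ((w : ℝ≥0∞))^k := ENNReal.tsum_le_tsum hterm
      _ = (c0 : ℝ≥0∞) * ∑' k : ℕ, ((w : ℝ≥0∞))^k := ENNReal.tsum_mul_left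
      _ = (c0 : ℝ≥0∞) * (1 - (w:ℝ≥0∞))⁻¹ := by rw [ENNReal.tsum_geometric]
  -- assemble
  calc ∫⁻ σ in sphere (0 : EuclideanSpace ℝ (Fin d)) 1,
      (‖ζ - r • σ‖₊ : ℝ≥0∞) ^ (-a) ∂μH[(d:ℝ)-1]
      = ∫⁻ σ in univ, (‖ζ - r • σ‖₊ : ℝ≥0∞) ^ (-a) ∂ν := (setLIntegral_univ _).symm
    _ = ∫⁻ σ in (A ∪ (Z ∪ ⋃ k, B k)) ∪ (A ∪ (Z ∪ ⋃ k, B k))ᶜ,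
        (‖ζ - r • σ‖₊ : ℝ≥0∞) ^ (-a) ∂ν := by rw [union_compl_self]
    _ ≤ (∫⁻ σ in A ∪ (Z ∪ ⋃ k, B k), (‖ζ - r • σ‖₊ : ℝ≥0∞) ^ (-a) ∂ν)
        + ∫⁻ σ in (A ∪ (Z ∪ ⋃ k, B k))ᶜ, (‖ζ - r • σ‖₊ : ℝ≥0∞) ^ (-a) ∂ν :=
        lintegral_union_le _ _ _
    _ = ∫⁻ σ in A ∪ (Z ∪ ⋃ k, B k), (‖ζ - r • σ‖₊ : ℝ≥0∞) ^ (-a) ∂ν := by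
        have hz : ν ((A ∪ (Z ∪ ⋃ k, B k))ᶜ) = 0 := by
          rw [hν, Measure.restrict_apply hUm.compl]
          refine measure_mono_null ?_ measure_empty
          intro x hx
          exact absurd (hcover hx.2) hx.1
        rw [setLIntegral_measure_zero _ _ hz, add_zero]
    _ ≤ (∫⁻ σ in A, (‖ζ - r • σ‖₊ : ℝ≥0∞) ^ (-a) ∂ν)
        + ((∫⁻ σ in Z, (‖ζ - r • σ‖₊ : ℝ≥0∞) ^ (-a) ∂ν)
          + ∫⁻ σ in ⋃ k, B k, (‖ζ - r • σ‖₊ : ℝ≥0∞) ^ (-a) ∂ν) := by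
        refine (lintegral_union_le _ _ _).trans ?_
        gcongr
        exact lintegral_union_le _ _ _
    _ ≤ Btot := by
        rw [hBtot]
        exact add_le_add hApart (by rw [hZpart, zero_add]; exact hBsum)

theorem stmt7 (d : ℕ) (hd : 3 ≤ d) (a : ℝ) (ha : a < (d : ℝ) - 1) :
    ∃ C : ℝ≥0, 0 < C ∧ ∀ ξ ζ : EuclideanSpace ℝ (Fin d), ¬(ξ = 0 ∧ ζ = 0) →
      (∫⁻ σ in Metric.sphere (0 : EuclideanSpace ℝ (Fin d)) 1,
          (‖ζ - ‖ξ‖ • σ‖₊ : ℝ≥0∞) ^ (-a) ∂μH[(d : ℝ) - 1]) ≤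
        C * ((‖ξ‖₊ : ℝ≥0∞) + (‖ζ‖₊ : ℝ≥0∞)) ^ (-a) := by
  have hfinS := sphere_meas_fin d hd
  have hsm : MeasurableSet (sphere (0 : EuclideanSpace ℝ (Fin d)) 1) :=
    (isClosed_sphere).measurableSet
  rcases le_or_gt a 0 with ha0 | ha0
  · -- a ≤ 0 : pointwise bound
    refine ⟨(μH[((d:ℝ)-1)] (sphere (0 : EuclideanSpace ℝ (Fin d)) 1)).toNNReal + 1,
      by positivity, fun ξ ζ hξζ => ?_⟩
    set N : ℝ≥0 := ‖ξ‖₊ + ‖ζ‖₊ with hN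
    have hcoe : ((‖ξ‖₊ : ℝ≥0∞) + (‖ζ‖₊ : ℝ≥0∞)) = (N : ℝ≥0∞) := by
      rw [hN]; push_cast; ring
    rw [hcoe]
    calc ∫⁻ σ in sphere (0 : EuclideanSpace ℝ (Fin d)) 1,
        (‖ζ - ‖ξ‖ • σ‖₊ : ℝ≥0∞) ^ (-a) ∂μH[(d : ℝ) - 1]
        ≤ ∫⁻ _ in sphere (0 : EuclideanSpace ℝ (Fin d)) 1,
            ((N : ℝ≥0∞)) ^ (-a) ∂μH[(d : ℝ) - 1] := by
          refine setLIntegral_mono' hsm fun σ hσ => ?_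
          have hσn : ‖σ‖ = 1 := by rwa [mem_sphere_iff_norm, sub_zero] at hσ
          have h1 : ‖ζ - ‖ξ‖ • σ‖ ≤ (N:ℝ) := by
            refine (norm_sub_le _ _).trans ?_
            rw [norm_smul, Real.norm_eq_abs, abs_of_nonneg (norm_nonneg ξ), hσn, mul_one]
            rw [hN]; push_cast
            linarith
          have h2 : (‖ζ - ‖ξ‖ • σ‖₊ : ℝ≥0∞) ≤ (N : ℝ≥0∞) := by
            rw [ENNReal.coe_le_coe, ← NNReal.coe_le_coe, coe_nnnorm]
            exact h1
          exact ENNReal.rpow_le_rpow h2 (by linarith)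
      _ = ((N : ℝ≥0∞)) ^ (-a) * μH[((d:ℝ)-1)] (sphere (0 : EuclideanSpace ℝ (Fin d)) 1) :=
          setLIntegral_const _ _
      _ ≤ ((N : ℝ≥0∞)) ^ (-a) *
            (((μH[((d:ℝ)-1)] (sphere (0 : EuclideanSpace ℝ (Fin d)) 1)).toNNReal + 1 : ℝ≥0)) := by
          gcongr
          rw [← ENNReal.coe_toNNReal hfinS.ne]
          exact_mod_cast le_self_add
      _ = (((μH[((d:ℝ)-1)] (sphere (0 : EuclideanSpace ℝ (Fin d)) 1)).toNNReal + 1 : ℝ≥0)) *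
            ((N : ℝ≥0∞)) ^ (-a) := mul_comm _ _
  · -- 0 < a : rescale
    obtain ⟨C2, hC2⟩ := main_norm d hd a ha ha0
    refine ⟨C2 + 1, by positivity, fun ξ ζ hξζ => ?_⟩
    set N : ℝ≥0 := ‖ξ‖₊ + ‖ζ‖₊ with hN
    have hN0 : N ≠ 0 := by
      rw [hN]
      intro h
      have h1 : ‖ξ‖₊ = 0 ∧ ‖ζ‖₊ = 0 := by
        constructor <;> [exact le_antisymm (h ▸ le_self_add) zero_le;
          exact le_antisymm (h ▸ le_add_self) zero_le]
      exact hξζ ⟨by simpa using h1.1, by simpa using h1.2⟩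
    have hNR : (0:ℝ) < N := by positivity
    have hcoe : ((‖ξ‖₊ : ℝ≥0∞) + (‖ζ‖₊ : ℝ≥0∞)) = (N : ℝ≥0∞) := by
      rw [hN]; push_cast; ring
    rw [hcoe]
    set r' : ℝ := ‖ξ‖ / N with hr'
    set ζ' : EuclideanSpace ℝ (Fin d) := ((N:ℝ))⁻¹ • ζ with hζ'
    have hr'0 : 0 ≤ r' := by positivity
    have hsum : r' + ‖ζ'‖ = 1 := by
      rw [hr', hζ', norm_smul, Real.norm_eq_abs, abs_of_pos (inv_pos.2 hNR)]
      have hthis : ((N:ℝ)) = ‖ξ‖ + ‖ζ‖ := by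
        rw [hN]; push_cast; ring
      rw [hthis]
      have hne : ‖ξ‖ + ‖ζ‖ ≠ 0 := by rw [← hthis]; exact ne_of_gt hNR
      field_simp
    have hkey : ∀ σ : EuclideanSpace ℝ (Fin d),
        (‖ζ - ‖ξ‖ • σ‖₊ : ℝ≥0∞) = (N : ℝ≥0∞) * (‖ζ' - r' • σ‖₊ : ℝ≥0∞) := by
      intro σ
      have h1 : ζ - ‖ξ‖ • σ = ((N:ℝ)) • (ζ' - r' • σ) := by
        rw [hζ', hr', smul_sub, smul_smul, mul_inv_cancel₀ (ne_of_gt hNR), one_smul,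
          smul_smul, mul_div_cancel₀ _ (ne_of_gt hNR)]
      rw [h1, nnnorm_smul]
      have h2 : ‖((N:ℝ))‖₊ = N := by
        ext; rw [coe_nnnorm, Real.norm_of_nonneg N.coe_nonneg]
      rw [h2, ENNReal.coe_mul]
    calc ∫⁻ σ in sphere (0 : EuclideanSpace ℝ (Fin d)) 1,
        (‖ζ - ‖ξ‖ • σ‖₊ : ℝ≥0∞) ^ (-a) ∂μH[(d : ℝ) - 1]
        = ∫⁻ σ in sphere (0 : EuclideanSpace ℝ (Fin d)) 1,
            ((N : ℝ≥0∞)) ^ (-a) * (‖ζ' - r' • σ‖₊ : ℝ≥0∞) ^ (-a) ∂μH[(d : ℝ) - 1] := by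
          refine lintegral_congr fun σ => ?_
          rw [hkey σ, ENNReal.mul_rpow_of_ne_top ENNReal.coe_ne_top ENNReal.coe_ne_top]
      _ = ((N : ℝ≥0∞)) ^ (-a) * ∫⁻ σ in sphere (0 : EuclideanSpace ℝ (Fin d)) 1,
            (‖ζ' - r' • σ‖₊ : ℝ≥0∞) ^ (-a) ∂μH[(d : ℝ) - 1] := by
          refine lintegral_const_mul' _ _ ?_
          rw [← ENNReal.coe_rpow_of_ne_zero hN0]
          exact ENNReal.coe_ne_top
      _ ≤ ((N : ℝ≥0∞)) ^ (-a) * C2 := by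
          gcongr
          exact hC2 r' ζ' hr'0 hsum
      _ ≤ ((C2 + 1 : ℝ≥0) : ℝ≥0∞) * ((N : ℝ≥0∞)) ^ (-a) := by
          rw [mul_comm]
          gcongr
          exact_mod_cast le_self_add
end
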